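/- arXiv:2208.00580 — 5 statements merged into one kernel-verified Lean document; each statement's English description precedes it below -/
import Mathlib

section
/- Let z₁, z₂, z₁', z₂' ∈ D and u₁, u₂, u₁ʰ, u₂ʰ ∈ ℝ satisfy uᵢʰ = uᵢ + log((1-|zᵢ|²)/(1-|zᵢ'|²)) for i = 1,2. Then |z₁' - z₂'| = e^{(u₁+u₂)/2}|z₁ - z₂| if and only if sinh(d_h(z₁',z₂')/2) = e^{(u₁ʰ+u₂ʰ)/2} sinh(d_h(z₁,z₂)/2). -/
/-- The hyperbolic (Poincaré) distance on the open unit disk `D = {z : ℂ | |z| < 1}`. -/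
noncomputable def hypDist (z₁ z₂ : ℂ) : ℝ :=
  Real.log ((‖1 - (starRingEnd ℂ) z₁ * z₂‖ + ‖z₁ - z₂‖) /
            (‖1 - (starRingEnd ℂ) z₁ * z₂‖ - ‖z₁ - z₂‖))

lemma key_id (z₁ z₂ : ℂ) :
    ‖1 - (starRingEnd ℂ) z₁ * z₂‖ ^ 2 - ‖z₁ - z₂‖ ^ 2 =
      (1 - ‖z₁‖ ^ 2) * (1 - ‖z₂‖ ^ 2) := by
  simp only [Complex.sq_norm, Complex.normSq_apply, Complex.sub_re, Complex.sub_im,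
    Complex.mul_re, Complex.mul_im, Complex.one_re, Complex.one_im,
    Complex.conj_re, Complex.conj_im]
  ring

lemma exp_half_log {x : ℝ} (hx : 0 < x) : Real.exp (Real.log x / 2) = Real.sqrt x := by
  rw [Real.sqrt_eq_rpow, Real.rpow_def_of_pos hx]; ring_nf

lemma sinh_hypDist (z₁ z₂ : ℂ) (h₁ : ‖z₁‖ < 1) (h₂ : ‖z₂‖ < 1) :
    Real.sinh (hypDist z₁ z₂ / 2) =
      ‖z₁ - z₂‖ /
        Real.sqrt ((1 - ‖z₁‖ ^ 2) * (1 - ‖z₂‖ ^ 2)) := by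
  set A := ‖1 - (starRingEnd ℂ) z₁ * z₂‖ with hA
  set B := ‖z₁ - z₂‖ with hB
  have hP : (0:ℝ) < (1 - ‖z₁‖ ^ 2) * (1 - ‖z₂‖ ^ 2) := by
    apply mul_pos <;> nlinarith [norm_nonneg z₁, norm_nonneg z₂]
  have hid := key_id z₁ z₂
  rw [← hA, ← hB] at hid
  have hBnn : (0:ℝ) ≤ B := norm_nonneg _
  have hAnn : (0:ℝ) ≤ A := norm_nonneg _
  have hAB : B < A := by nlinarith
  have h1 : (0:ℝ) < A + B := by linarith
  have h2 : (0:ℝ) < A - B := by linarith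
  have hx : (0:ℝ) < (A + B) / (A - B) := div_pos h1 h2
  rw [hypDist, ← hA, ← hB, Real.sinh_eq, exp_half_log hx,
    Real.exp_neg, exp_half_log hx]
  have hsq : Real.sqrt ((1 - ‖z₁‖ ^ 2) * (1 - ‖z₂‖ ^ 2))
      = Real.sqrt (A + B) * Real.sqrt (A - B) := by
    rw [← Real.sqrt_mul h1.le]
    congr 1; nlinarith
  rw [hsq, Real.sqrt_div h1.le]
  have ha : (0:ℝ) < Real.sqrt (A + B) := Real.sqrt_pos.mpr h1
  have hb : (0:ℝ) < Real.sqrt (A - B) := Real.sqrt_pos.mpr h2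
  have ha2 : Real.sqrt (A + B) ^ 2 = A + B := Real.sq_sqrt h1.le
  have hb2 : Real.sqrt (A - B) ^ 2 = A - B := Real.sq_sqrt h2.le
  field_simp
  nlinarith [mul_pos ha hb]

theorem euclidean_iff_hyperbolic_discrete_conformal
    (z₁ z₂ z₁' z₂' : ℂ)
    (h₁ : ‖z₁‖ < 1) (h₂ : ‖z₂‖ < 1)
    (h₁' : ‖z₁'‖ < 1) (h₂' : ‖z₂'‖ < 1)
    (u₁ u₂ u₁h u₂h : ℝ)
    (hu₁ : u₁h = u₁ + Real.log ((1 - ‖z₁‖ ^ 2) / (1 - ‖z₁'‖ ^ 2)))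
    (hu₂ : u₂h = u₂ + Real.log ((1 - ‖z₂‖ ^ 2) / (1 - ‖z₂'‖ ^ 2))) :
    ‖z₁' - z₂'‖ = Real.exp ((u₁ + u₂) / 2) * ‖z₁ - z₂‖ ↔
      Real.sinh (hypDist z₁' z₂' / 2) =
        Real.exp ((u₁h + u₂h) / 2) * Real.sinh (hypDist z₁ z₂ / 2) := by
  have p₁pos : (0:ℝ) < 1 - ‖z₁‖ ^ 2 := by
    nlinarith [norm_nonneg z₁]
  have p₂pos : (0:ℝ) < 1 - ‖z₂‖ ^ 2 := by
    nlinarith [norm_nonneg z₂]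
  have q₁pos : (0:ℝ) < 1 - ‖z₁'‖ ^ 2 := by
    nlinarith [norm_nonneg z₁']
  have q₂pos : (0:ℝ) < 1 - ‖z₂'‖ ^ 2 := by
    nlinarith [norm_nonneg z₂']
  set p₁ := 1 - ‖z₁‖ ^ 2
  set p₂ := 1 - ‖z₂‖ ^ 2
  set q₁ := 1 - ‖z₁'‖ ^ 2
  set q₂ := 1 - ‖z₂'‖ ^ 2
  rw [sinh_hypDist z₁' z₂' h₁' h₂', sinh_hypDist z₁ z₂ h₁ h₂]
  subst hu₁ hu₂
  rw [show (u₁ + Real.log (p₁ / q₁) + (u₂ + Real.log (p₂ / q₂))) / 2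
      = (u₁ + u₂) / 2 + (Real.log (p₁ / q₁) / 2 + Real.log (p₂ / q₂) / 2) by ring,
    Real.exp_add, Real.exp_add, exp_half_log (div_pos p₁pos q₁pos),
    exp_half_log (div_pos p₂pos q₂pos)]
  set E := Real.exp ((u₁ + u₂) / 2) with hE
  have hEpos : (0:ℝ) < E := Real.exp_pos _
  have hQne : Real.sqrt (q₁ * q₂) ≠ 0 :=
    ne_of_gt (Real.sqrt_pos.mpr (mul_pos q₁pos q₂pos))
  have hsimp : E * (Real.sqrt (p₁ / q₁) * Real.sqrt (p₂ / q₂)) *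
      (‖z₁ - z₂‖ / Real.sqrt (p₁ * p₂))
      = E * ‖z₁ - z₂‖ / Real.sqrt (q₁ * q₂) := by
    rw [Real.sqrt_div p₁pos.le, Real.sqrt_div p₂pos.le, Real.sqrt_mul p₁pos.le,
      Real.sqrt_mul q₁pos.le]
    have s1 := Real.sqrt_pos.mpr p₁pos
    have s2 := Real.sqrt_pos.mpr p₂pos
    have s3 := Real.sqrt_pos.mpr q₁pos
    have s4 := Real.sqrt_pos.mpr q₂pos
    field_simp
  rw [hsimp]
  constructor
  · intro h; rw [h]
  · intro h
    field_simp [hQne] at h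
    change ‖z₁' - z₂'‖ * √(q₁ * q₂) / √(q₁ * q₂) = E * ‖z₁ - z₂‖ at h
    rwa [mul_div_assoc, div_self hQne, mul_one] at h
end

section
/- Let G = (V,E) be a locally finite graph, V₀ ⊆ V finite, η : E → ℝ_{>0}, and g : ∂V₀ → ℝ. Then there exists a unique f : V₀ → ℝ with f = g on ∂V₀ and f harmonic (with weights η) at every vertex of int(V₀). -/
open Classical in
/-- Extension by zero as a linear map. -/
noncomputable def extMap {V : Type*} (V₀ : Finset V) : (↥V₀ → ℝ) →ₗ[ℝ] (V → ℝ) where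
  toFun f v := if hv : v ∈ V₀ then f ⟨v, hv⟩ else 0
  map_add' f g := by
    classical
    funext v; by_cases hv : v ∈ V₀ <;> simp [hv]
  map_smul' c f := by
    classical
    funext v; by_cases hv : v ∈ V₀ <;> simp [hv]

open Classical in
/-- The Dirichlet operator. -/
noncomputable def dirMap {V : Type*} (G : SimpleGraph V) [G.LocallyFinite]
    (V₀ : Finset V) (η : V → V → ℝ) : (↥V₀ → ℝ) →ₗ[ℝ] (↥V₀ → ℝ) where
  toFun f i := if (∃ j, j ∉ V₀ ∧ G.Adj ↑i j) then f i
    else ∑ j ∈ G.neighborFinset ↑i, η ↑i j * (extMap V₀ f j - extMap V₀ f ↑i)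
  map_add' f g := by
    funext i
    by_cases hcond : ∃ j, j ∉ V₀ ∧ G.Adj ↑i j
    · simp [hcond]
    · simp only [hcond, if_false, map_add, Pi.add_apply, ← Finset.sum_add_distrib]
      exact Finset.sum_congr rfl fun j _ => by ring
  map_smul' c f := by
    funext i
    by_cases hcond : ∃ j, j ∉ V₀ ∧ G.Adj ↑i j
    · simp [hcond]
    · simp only [hcond, if_false, map_smul, Pi.smul_apply, smul_eq_mul, RingHom.id_apply,
        Finset.mul_sum]
      exact Finset.sum_congr rfl fun j _ => by ring

/-- Maximum principle: a function vanishing outside `V₀` and on its boundary and harmonic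
at all interior vertices is nonpositive on `V₀`. -/
lemma dirichlet_max_principle {V : Type*} (G : SimpleGraph V) [G.LocallyFinite]
    (hconn : G.Connected) (V₀ : Finset V) (hcompl : ∃ j, j ∉ V₀)
    (η : V → V → ℝ) (hη : ∀ i j, G.Adj i j → 0 < η i j)
    (h : V → ℝ) (h0 : ∀ i, i ∉ V₀ → h i = 0)
    (hb : ∀ i ∈ V₀, (∃ j, j ∉ V₀ ∧ G.Adj i j) → h i = 0)
    (hint : ∀ i ∈ V₀, (∀ j, G.Adj i j → j ∈ V₀) →
      ∑ j ∈ G.neighborFinset i, η i j * (h j - h i) = 0) :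
    ∀ v ∈ V₀, h v ≤ 0 := by
  by_contra hc
  push_neg at hc
  obtain ⟨v, hv, hv0⟩ := hc
  have hne : V₀.Nonempty := ⟨v, hv⟩
  set M := V₀.sup' hne h with hMdef
  have hMpos : 0 < M := lt_of_lt_of_le hv0 (Finset.le_sup' h hv)
  have hle : ∀ w ∈ V₀, h w ≤ M := fun w hw => Finset.le_sup' h hw
  obtain ⟨i₀, hi₀, hi₀M⟩ := Finset.exists_mem_eq_sup' hne h
  have hclosed : ∀ u, u ∈ V₀ → h u = M → ∀ j, G.Adj u j → j ∈ V₀ ∧ h j = M := by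
    intro u hu huM j hadj
    have hintu : ∀ k, G.Adj u k → k ∈ V₀ := by
      by_contra hcon
      push_neg at hcon
      obtain ⟨k, hk1, hk2⟩ := hcon
      have h0u := hb u hu ⟨k, hk2, hk1⟩
      rw [h0u] at huM
      exact absurd huM.symm (ne_of_gt hMpos)
    have hsum := hint u hu hintu
    have hterm : ∀ k ∈ G.neighborFinset u, η u k * (h k - h u) ≤ 0 := by
      intro k hk
      rw [SimpleGraph.mem_neighborFinset] at hk
      have hkle := hle k (hintu k hk)
      nlinarith [hη u k hk]
    have hz := (Finset.sum_eq_zero_iff_of_nonpos hterm).mp hsum j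
      (by rwa [SimpleGraph.mem_neighborFinset])
    have hdiff : h j - h u = 0 := by
      rcases mul_eq_zero.mp hz with h1 | h2
      · exact absurd h1 (ne_of_gt (hη u j hadj))
      · exact h2
    exact ⟨hintu j hadj, by linarith⟩
  have hwalk : ∀ {a b : V} (_ : G.Walk a b), a ∈ V₀ → h a = M → b ∈ V₀ ∧ h b = M := by
    intro a b p
    induction p with
    | nil => exact fun ha hM' => ⟨ha, hM'⟩
    | cons hadj p ih =>
      intro ha hM'
      obtain ⟨hx, hxM⟩ := hclosed _ ha hM' _ hadj
      exact ih hx hxM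
  obtain ⟨j, hj⟩ := hcompl
  obtain ⟨p⟩ := hconn i₀ j
  exact hj (hwalk p hi₀ hi₀M.symm).1

open Classical in
/-- Existence and uniqueness of the solution of the discrete Dirichlet problem: given boundary
values `g` on `∂V₀`, there is a unique function on `V₀` (extended by `0` outside `V₀`) equal to
`g` on `∂V₀` and harmonic with weights `η` at every interior vertex of `V₀`. -/
theorem discrete_dirichlet_problem {V : Type*} (G : SimpleGraph V)
    [G.LocallyFinite] (hconn : G.Connected)
    (V₀ : Finset V) (hcompl : ∃ j, j ∉ V₀)
    (hbd : ∃ i ∈ V₀, ∃ j, j ∉ V₀ ∧ G.Adj i j)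
    (η : V → V → ℝ) (hη : ∀ i j, G.Adj i j → 0 < η i j)
    (g : V → ℝ) :
    ∃! f : V → ℝ,
      (∀ i, i ∉ V₀ → f i = 0) ∧
      (∀ i ∈ V₀, (∃ j, j ∉ V₀ ∧ G.Adj i j) → f i = g i) ∧
      (∀ i ∈ V₀, (∀ j, G.Adj i j → j ∈ V₀) →
        ∑ j ∈ G.neighborFinset i, η i j * (f j - f i) = 0) := by
  classical
  set L := dirMap G V₀ η with hL
  have hLapp : ∀ (f : ↥V₀ → ℝ) (i : ↥V₀),
      L f i = if (∃ j, j ∉ V₀ ∧ G.Adj ↑i j) then f i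
        else ∑ j ∈ G.neighborFinset ↑i, η ↑i j * (extMap V₀ f j - extMap V₀ f ↑i) := by
    intro f i; rfl
  have hextmem : ∀ (f : ↥V₀ → ℝ) (v : V) (hv : v ∈ V₀), extMap V₀ f v = f ⟨v, hv⟩ := by
    intro f v hv
    simp only [extMap, LinearMap.coe_mk, AddHom.coe_mk, dif_pos hv]
  have hextnot : ∀ (f : ↥V₀ → ℝ) (v : V), v ∉ V₀ → extMap V₀ f v = 0 := by
    intro f v hv
    simp only [extMap, LinearMap.coe_mk, AddHom.coe_mk, dif_neg hv]
  -- injectivity via the maximum principle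
  have hinj : Function.Injective L := by
    rw [injective_iff_map_eq_zero]
    intro f hf
    have key : ∀ε : ℝ, ε = 1 ∨ ε = -1 → ∀ v, ∀ hv : v ∈ V₀, ε * f ⟨v, hv⟩ ≤ 0 := by
      intro ε hε
      have hres := fun (v : V) (hv : v ∈ V₀) => congrFun hf ⟨v, hv⟩
      have := dirichlet_max_principle G hconn V₀ hcompl η hη
        (fun v => ε * extMap V₀ f v)
        (fun i hi => by show ε * extMap V₀ f i = 0; rw [hextnot f i hi, mul_zero])
        (fun i hi hbdi => by
          show ε * extMap V₀ f i = 0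
          have h1 := hres i hi
          rw [hLapp, if_pos hbdi] at h1
          simp only [Pi.zero_apply] at h1
          rw [hextmem f i hi, h1, mul_zero])
        (fun i hi hinti => by
          show ∑ j ∈ G.neighborFinset i, η i j * (ε * extMap V₀ f j - ε * extMap V₀ f i) = 0
          have h1 := hres i hi
          rw [hLapp, if_neg (by push_neg; intro j hj; by_contra hc; exact hj (hinti j hc))] at h1
          simp only [Pi.zero_apply] at h1
          have : ∑ j ∈ G.neighborFinset i,
              η i j * (ε * extMap V₀ f j - ε * extMap V₀ f i)
              = ε * ∑ j ∈ G.neighborFinset i, η i j * (extMap V₀ f j - extMap V₀ f i) := by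
            rw [Finset.mul_sum]
            exact Finset.sum_congr rfl fun j _ => by ring
          rw [this, h1, mul_zero])
      intro v hv
      have h2 := this v hv
      rwa [hextmem f v hv] at h2
    funext v
    obtain ⟨w, hw⟩ := v
    have h1 := key 1 (Or.inl rfl) w hw
    have h2 := key (-1) (Or.inr rfl) w hw
    simp only [one_mul, neg_mul, neg_nonpos] at h1 h2
    simpa using le_antisymm h1 (by linarith)
  have hsurj : Function.Surjective L := LinearMap.injective_iff_surjective.mp hinj
  -- the target vector
  set b : ↥V₀ → ℝ := fun i => if (∃ j, j ∉ V₀ ∧ G.Adj ↑i j) then g ↑i else 0 with hbdef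
  obtain ⟨f₀, hf₀⟩ := hsurj b
  refine ⟨extMap V₀ f₀, ⟨fun i hi => hextnot f₀ i hi, ?_, ?_⟩, ?_⟩
  · intro i hi hbdi
    have h1 := congrFun hf₀ ⟨i, hi⟩
    rw [hLapp, if_pos hbdi] at h1
    rw [hextmem f₀ i hi, h1, hbdef]
    simp only [if_pos hbdi]
  · intro i hi hinti
    have h1 := congrFun hf₀ ⟨i, hi⟩
    have hnb : ¬ ∃ j, j ∉ V₀ ∧ G.Adj i j := by
      push_neg; intro j hj; by_contra hc; exact hj (hinti j hc)
    rw [hLapp, if_neg hnb] at h1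
    rw [hbdef] at h1
    simp only [if_neg hnb] at h1
    exact h1
  · -- uniqueness
    intro f' ⟨hf'0, hf'b, hf'h⟩
    set f₀' : ↥V₀ → ℝ := fun i => f' ↑i with hf₀'def
    have hext' : extMap V₀ f₀' = f' := by
      funext v
      by_cases hv : v ∈ V₀
      · rw [hextmem f₀' v hv]
      · rw [hextnot f₀' v hv, hf'0 v hv]
    have hLf₀' : L f₀' = b := by
      funext i
      obtain ⟨w, hw⟩ := i
      by_cases hbdi : ∃ j, j ∉ V₀ ∧ G.Adj w j
      · rw [hLapp, if_pos hbdi, hbdef]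
        simp only [if_pos hbdi]
        exact hf'b w hw hbdi
      · have hinti : ∀ j, G.Adj w j → j ∈ V₀ := by
          push_neg at hbdi
          intro j hj; by_contra hc; exact (hbdi j hc) hj
        rw [hLapp, if_neg hbdi, hbdef]
        simp only [if_neg hbdi]
        rw [hext']
        exact hf'h w hw hinti
    have : f₀' = f₀ := hinj (by rw [hLf₀', hf₀])
    rw [← hext', this]
end

section
/- Let two Euclidean triangles Δijk share all three vertex labels, with side lengths l and l' related by l'_{ab} = e^{(u_a+u_b)/2} l_{ab} for a vertex function u (a discrete conformal change). If all inner angles of both triangles are at least ε > 0, then e^{(u_j - u_i)/2} ≥ sin²ε; consequently |u_j - u_i| ≤ 4 log(1/sin ε) for every edge ij. -/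
open EuclideanGeometry
open scoped EuclideanGeometry RealInnerProductSpace

lemma sin_angle_mul_symm (p1 p2 p3 : EuclideanSpace ℝ (Fin 2)) :
    Real.sin (∠ p2 p1 p3) * (dist p1 p2 * dist p1 p3) =
      Real.sin (∠ p1 p2 p3) * (dist p2 p1 * dist p2 p3) := by
  have h1 : ∠ p2 p1 p3 = InnerProductGeometry.angle (p2 - p1) (p3 - p1) := rfl
  have h2 : ∠ p1 p2 p3 = InnerProductGeometry.angle (p1 - p2) (p3 - p2) := rfl
  rw [h1, h2, dist_eq_norm', dist_eq_norm', dist_eq_norm', dist_eq_norm',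
    InnerProductGeometry.sin_angle_mul_norm_mul_norm,
    InnerProductGeometry.sin_angle_mul_norm_mul_norm]
  congr 1
  simp only [inner_sub_left, inner_sub_right, real_inner_comm p1 p2, real_inner_comm p1 p3,
    real_inner_comm p2 p3]
  ring

lemma sin_le_sin_of_mem {ε B : ℝ} (h0 : 0 ≤ ε) (hσ : ε ≤ Real.pi / 2)
    (h1 : ε ≤ B) (h2 : B ≤ Real.pi - ε) : Real.sin ε ≤ Real.sin B := by
  rcases le_or_gt B (Real.pi / 2) with h | h
  · exact Real.strictMonoOn_sin.monotoneOn (by constructor <;> linarith)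
      (by constructor <;> linarith) h1
  · rw [← Real.sin_pi_sub B]
    exact Real.strictMonoOn_sin.monotoneOn (by constructor <;> linarith)
      (by constructor <;> linarith) (by linarith)

lemma ratio_ge (ε : ℝ) (pa pb pc : EuclideanSpace ℝ (Fin 2))
    (hab : pa ≠ pb) (hac : pa ≠ pc) (hε0 : 0 ≤ ε) (hεσ : ε ≤ Real.pi / 2)
    (hA : ε ≤ ∠ pb pa pc) (hB : ε ≤ ∠ pa pb pc) (hC : ε ≤ ∠ pa pc pb) :
    Real.sin ε * dist pb pc ≤ dist pa pc := by
  have hsum : ∠ pa pb pc + ∠ pb pc pa + ∠ pc pa pb = Real.pi :=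
    angle_add_angle_add_angle_eq_pi pc (Ne.symm hab)
  have hC' : ε ≤ ∠ pb pc pa := by rwa [angle_comm]
  have hA' : ε ≤ ∠ pc pa pb := by rwa [angle_comm]
  have hBle : ∠ pa pb pc ≤ Real.pi - ε := by linarith
  have hsinB : Real.sin ε ≤ Real.sin (∠ pa pb pc) :=
    sin_le_sin_of_mem hε0 hεσ hB hBle
  have hkey := sin_angle_mul_symm pa pb pc
  rw [dist_comm pb pa] at hkey
  have hdab : (0:ℝ) < dist pa pb := dist_pos.2 hab
  have hda : Real.sin (∠ pb pa pc) * dist pa pc = Real.sin (∠ pa pb pc) * dist pb pc := by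
    apply mul_left_cancel₀ (ne_of_gt hdab)
    nlinarith [hkey]
  have hsinA : Real.sin (∠ pb pa pc) ≤ 1 := Real.sin_le_one _
  have hd : (0:ℝ) ≤ dist pb pc := dist_nonneg
  have hd2 : (0:ℝ) ≤ dist pa pc := dist_nonneg
  calc Real.sin ε * dist pb pc ≤ Real.sin (∠ pa pb pc) * dist pb pc :=
        mul_le_mul_of_nonneg_right hsinB hd
    _ = Real.sin (∠ pb pa pc) * dist pa pc := hda.symm
    _ ≤ 1 * dist pa pc := mul_le_mul_of_nonneg_right hsinA hd2
    _ = dist pa pc := one_mul _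

/-- For a discrete conformal change between two nondegenerate Euclidean triangles all of whose
angles are at least `ε > 0`, the conformal factors satisfy
`e^{(u_b - u_a)/2} ≥ sin² ε`, and consequently `|u_b - u_a| ≤ 4 log(1 / sin ε)` for every edge. -/
theorem conformal_factor_bound_on_triangle
    (P P' : Fin 3 → EuclideanSpace ℝ (Fin 2)) (u : Fin 3 → ℝ) (ε : ℝ) (hε : 0 < ε)
    (hnd : AffineIndependent ℝ P) (hnd' : AffineIndependent ℝ P')
    (hconf : ∀ a b : Fin 3, dist (P' a) (P' b) = Real.exp ((u a + u b) / 2) * dist (P a) (P b))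
    (hang : ∀ a b c : Fin 3, a ≠ b → b ≠ c → a ≠ c →
      ε ≤ ∠ (P b) (P a) (P c) ∧ ε ≤ ∠ (P' b) (P' a) (P' c)) :
    ∀ a b : Fin 3, Real.sin ε ^ 2 ≤ Real.exp ((u b - u a) / 2) ∧
      |u b - u a| ≤ 4 * Real.log (1 / Real.sin ε) := by
  have hinj : Function.Injective P := hnd.injective
  have hinj' : Function.Injective P' := hnd'.injective
  have hpi := Real.pi_pos
  have hε3 : 3 * ε ≤ Real.pi := by
    have hsum : ∠ (P 0) (P 1) (P 2) + ∠ (P 1) (P 2) (P 0) + ∠ (P 2) (P 0) (P 1) = Real.pi :=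
      angle_add_angle_add_angle_eq_pi (P 2) (hinj.ne (by decide))
    have h1 := (hang 1 0 2 (by decide) (by decide) (by decide)).1
    have h2 := (hang 2 1 0 (by decide) (by decide) (by decide)).1
    have h3 := (hang 0 2 1 (by decide) (by decide) (by decide)).1
    linarith
  have hεσ : ε ≤ Real.pi / 2 := by linarith
  have hsinpos : 0 < Real.sin ε := Real.sin_pos_of_pos_of_lt_pi hε (by linarith)
  have hsin1 : Real.sin ε ≤ 1 := Real.sin_le_one _
  have hlognn : 0 ≤ Real.log (1 / Real.sin ε) := by
    apply Real.log_nonneg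
    rw [le_div_iff₀ hsinpos, one_mul]; exact hsin1
  have hls : Real.log (1 / Real.sin ε) = - Real.log (Real.sin ε) := by
    rw [one_div, Real.log_inv]
  have key : ∀ a b : Fin 3, a ≠ b → Real.sin ε ^ 2 ≤ Real.exp ((u b - u a) / 2) := by
    intro a b hab
    obtain ⟨c, hca, hcb⟩ : ∃ c, c ≠ a ∧ c ≠ b := by revert hab; revert b; revert a; decide
    have hbc : b ≠ c := hcb.symm
    have hac : a ≠ c := hca.symm
    have hP : Real.sin ε * dist (P b) (P c) ≤ dist (P a) (P c) :=
      ratio_ge ε (P a) (P b) (P c) (hinj.ne hab) (hinj.ne hac) hε.le hεσ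
        (hang a b c hab hbc hac).1 (hang b a c hab.symm hac hbc).1
        (hang c a b hca hab hcb).1
    have hP' : Real.sin ε * dist (P' a) (P' c) ≤ dist (P' b) (P' c) :=
      ratio_ge ε (P' b) (P' a) (P' c) (hinj'.ne hab.symm) (hinj'.ne hbc) hε.le hεσ
        (hang b a c hab.symm hac hbc).2 (hang a b c hab hbc hac).2
        (hang c b a hcb hab.symm hca).2
    have heq : Real.exp ((u b - u a) / 2) * (dist (P' a) (P' c) * dist (P b) (P c))
        = dist (P' b) (P' c) * dist (P a) (P c) := by
      rw [hconf a c, hconf b c,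
        show Real.exp ((u b + u c) / 2)
            = Real.exp ((u b - u a) / 2) * Real.exp ((u a + u c) / 2) from by
          rw [← Real.exp_add]; congr 1; ring]
      ring
    have hA'pos : 0 < dist (P' a) (P' c) := dist_pos.2 (hinj'.ne hac)
    have hBpos : 0 < dist (P b) (P c) := dist_pos.2 (hinj.ne hbc)
    have hm : Real.sin ε ^ 2 * (dist (P' a) (P' c) * dist (P b) (P c))
        ≤ Real.exp ((u b - u a) / 2) * (dist (P' a) (P' c) * dist (P b) (P c)) := by
      calc Real.sin ε ^ 2 * (dist (P' a) (P' c) * dist (P b) (P c))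
          = (Real.sin ε * dist (P' a) (P' c)) * (Real.sin ε * dist (P b) (P c)) := by ring
        _ ≤ dist (P' b) (P' c) * dist (P a) (P c) :=
            mul_le_mul hP' hP (by positivity) dist_nonneg
        _ = _ := heq.symm
    exact le_of_mul_le_mul_right hm (by positivity)
  intro a b
  by_cases hab : a = b
  · subst hab
    simp only [sub_self, abs_zero]
    constructor
    · rw [show (0:ℝ)/2 = 0 by norm_num, Real.exp_zero]; nlinarith
    · positivity
  · have h1 := key a b hab
    have h2 := key b a (Ne.symm hab)
    have e1 : 2 * Real.log (Real.sin ε) ≤ (u b - u a) / 2 := by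
      have h := Real.log_le_log (by positivity) h1
      rw [Real.log_exp, Real.log_pow] at h
      push_cast at h; linarith
    have e2 : 2 * Real.log (Real.sin ε) ≤ (u a - u b) / 2 := by
      have h := Real.log_le_log (by positivity) h2
      rw [Real.log_exp, Real.log_pow] at h
      push_cast at h; linarith
    refine ⟨h1, ?_⟩
    rw [abs_le]
    constructor <;> [linarith [e1, hls]; linarith [e2, hls]]
end

section
/- Duffin reciprocity: for a finite electrical network separating two disjoint nonempty vertex sets V₁, V₂ (with V \ (V₁∪V₂) finite), and resistances μ : E₀ → ℝ_{>0}, the discrete extremal length EL(V₁,V₂,μ) and discrete extremal width EW(V₁,V₂,μ) satisfy EL · EW = 1. -/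
open Finset
set_option maxHeartbeats 1000000

variable {V : Type*} [Fintype V] [DecidableEq V]

/-- The edges of the network relevant for the extremal length problem between `V₁` and `V₂`:
edges having at least one endpoint outside `V₁ ∪ V₂`. -/
noncomputable def groundEdges (G : SimpleGraph V) (V₁ V₂ : Finset V) : Finset (Sym2 V) :=
  letI := Classical.dec
  Finset.univ.filter (fun e => e ∈ G.edgeSet ∧ ∃ v ∈ e, v ∉ V₁ ∧ v ∉ V₂)

/-- The paths between `V₁` and `V₂`: edge sets of simple (combinatorial) paths joining a vertex
of `V₁` to a vertex of `V₂`, all of whose edges lie in the ground edge set. -/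
def pathSets (G : SimpleGraph V) (V₁ V₂ : Finset V) : Set (Finset (Sym2 V)) :=
  {p | ↑p ⊆ (groundEdges G V₁ V₂ : Set (Sym2 V)) ∧
    ∃ a ∈ V₁, ∃ b ∈ V₂, ∃ w : G.Walk a b, w.IsPath ∧ w.edges.toFinset = p}

/-- The cuts between `V₁` and `V₂`: sets of ground edges meeting every path. -/
def cutSets (G : SimpleGraph V) (V₁ V₂ : Finset V) : Set (Finset (Sym2 V)) :=
  {q | ↑q ⊆ (groundEdges G V₁ V₂ : Set (Sym2 V)) ∧
    ∀ p ∈ pathSets G V₁ V₂, (p ∩ q).Nonempty}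

/-! ### auxiliary distance function -/

def dReach (G : SimpleGraph V) (V₁ : Finset V) (E : Finset (Sym2 V)) (x : V) : Prop :=
  ∃ a ∈ V₁, ∃ W : G.Walk a x, ∀ e ∈ W.edges, e ∈ E

def dVals (G : SimpleGraph V) (V₁ : Finset V) (E : Finset (Sym2 V)) (ℓ : Sym2 V → ℝ)
    (x : V) : Set ℝ :=
  {r | ∃ a ∈ V₁, ∃ W : G.Walk a x, (∀ e ∈ W.edges, e ∈ E) ∧ r = ∑ e ∈ W.edges.toFinset, ℓ e}

open Classical in
noncomputable def dDist (G : SimpleGraph V) (V₁ : Finset V) (E : Finset (Sym2 V))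
    (ℓ : Sym2 V → ℝ) (x : V) : ℝ :=
  if dReach G V₁ E x then sInf (dVals G V₁ E ℓ x) else 2

section dlemmas
variable {G : SimpleGraph V} {V₁ V₂ : Finset V} {E : Finset (Sym2 V)} {ℓ : Sym2 V → ℝ}

lemma dVals_nonneg (hℓ : ∀ e, 0 ≤ ℓ e) {x : V} {r : ℝ} (hr : r ∈ dVals G V₁ E ℓ x) : 0 ≤ r := by
  obtain ⟨a, ha, W, hWE, rfl⟩ := hr
  exact Finset.sum_nonneg fun e _ => hℓ e

lemma dVals_bdd (hℓ : ∀ e, 0 ≤ ℓ e) (x : V) : BddBelow (dVals G V₁ E ℓ x) :=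
  ⟨0, fun r hr => dVals_nonneg hℓ hr⟩

lemma dVals_nonempty {x : V} (h : dReach G V₁ E x) : (dVals G V₁ E ℓ x).Nonempty := by
  obtain ⟨a, ha, W, hWE⟩ := h
  exact ⟨_, a, ha, W, hWE, rfl⟩

lemma dDist_nonneg (hℓ : ∀ e, 0 ≤ ℓ e) (x : V) : 0 ≤ dDist G V₁ E ℓ x := by
  unfold dDist
  split
  · exact le_csInf (dVals_nonempty (by assumption)) fun r hr => dVals_nonneg hℓ hr
  · norm_num

lemma dDist_of_mem_V₁ (hℓ : ∀ e, 0 ≤ ℓ e) {a : V} (ha : a ∈ V₁) : dDist G V₁ E ℓ a = 0 := by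
  have hreach : dReach G V₁ E a := ⟨a, ha, SimpleGraph.Walk.nil, by simp⟩
  have h0 : (0 : ℝ) ∈ dVals G V₁ E ℓ a := ⟨a, ha, SimpleGraph.Walk.nil, by simp, by simp⟩
  refine le_antisymm ?_ (dDist_nonneg hℓ a)
  rw [dDist, if_pos hreach]
  exact csInf_le (dVals_bdd hℓ a) h0

lemma dDist_le_adj (hℓ : ∀ e, 0 ≤ ℓ e) {x y : V} (hxy : G.Adj x y) (he : s(x, y) ∈ E)
    (hr : dReach G V₁ E x) :
    dReach G V₁ E y ∧ dDist G V₁ E ℓ y ≤ dDist G V₁ E ℓ x + ℓ s(x, y) := by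
  have key : ∀ r ∈ dVals G V₁ E ℓ x,
      dReach G V₁ E y ∧ dDist G V₁ E ℓ y ≤ r + ℓ s(x, y) := by
    rintro r ⟨a, ha, W, hWE, rfl⟩
    have hedges : (W.concat hxy).edges = W.edges ++ [s(x, y)] :=
      (W.edges_concat hxy).trans List.concat_eq_append
    have hWE' : ∀ e ∈ (W.concat hxy).edges, e ∈ E := by
      intro e hee
      rw [hedges, List.mem_append] at hee
      rcases hee with h | h
      · exact hWE e h
      · simp at h; subst h; exact he
    have hreach : dReach G V₁ E y := ⟨a, ha, W.concat hxy, hWE'⟩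
    refine ⟨hreach, ?_⟩
    have hmem : (∑ e ∈ (W.concat hxy).edges.toFinset, ℓ e) ∈ dVals G V₁ E ℓ y :=
      ⟨a, ha, W.concat hxy, hWE', rfl⟩
    have hle : dDist G V₁ E ℓ y ≤ ∑ e ∈ (W.concat hxy).edges.toFinset, ℓ e := by
      rw [dDist, if_pos hreach]; exact csInf_le (dVals_bdd hℓ y) hmem
    refine hle.trans ?_
    rw [hedges]
    have : (W.edges ++ [s(x, y)]).toFinset = insert s(x, y) W.edges.toFinset := by
      rw [List.toFinset_append]
      ext; simp [or_comm]

    rw [this]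
    by_cases hmem2 : s(x, y) ∈ W.edges.toFinset
    · rw [Finset.insert_eq_self.2 hmem2]
      have := hℓ s(x, y); linarith
    · rw [Finset.sum_insert hmem2]; linarith
  have hne : (dVals G V₁ E ℓ x).Nonempty := dVals_nonempty hr
  obtain ⟨r₀, hr₀⟩ := hne
  refine ⟨(key r₀ hr₀).1, ?_⟩
  have hx : dDist G V₁ E ℓ x = sInf (dVals G V₁ E ℓ x) := by rw [dDist, if_pos hr]
  rw [hx, ← sub_le_iff_le_add]
  exact le_csInf (dVals_nonempty hr) fun r hrr => by linarith [(key r hrr).2]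

lemma dDist_of_mem_V₂ (hℓ : ∀ e, 0 ≤ ℓ e) (hdisj : Disjoint V₁ V₂)
    (hfeas : ∀ p ∈ pathSets G V₁ V₂, 1 ≤ ∑ e ∈ p, ℓ e) {b : V} (hb : b ∈ V₂) :
    1 ≤ dDist G V₁ (groundEdges G V₁ V₂) ℓ b := by
  rw [dDist]
  split
  · refine le_csInf (dVals_nonempty (by assumption)) ?_
    rintro r ⟨a, ha, W, hWE, rfl⟩
    set P := W.bypass with hP
    have hPpath : P.IsPath := W.bypass_isPath
    have hPsub : P.edges ⊆ W.edges := W.edges_bypass_subset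
    have hpmem : P.edges.toFinset ∈ pathSets G V₁ V₂ := by
      refine ⟨?_, a, ha, b, hb, P, hPpath, rfl⟩
      intro e hee
      have hee' : e ∈ P.edges := by simpa using hee
      exact Finset.mem_coe.2 (hWE e (hPsub hee'))
    have h1 : 1 ≤ ∑ e ∈ P.edges.toFinset, ℓ e := hfeas _ hpmem
    refine h1.trans (Finset.sum_le_sum_of_subset_of_nonneg ?_ fun e _ _ => hℓ e)
    intro e hee
    rw [List.mem_toFinset] at hee ⊢
    exact hPsub hee
  · norm_num

end dlemmas

lemma clamp_telescope (s : ℕ → ℝ) (hs : Monotone s) {α β : ℝ} (hαβ : α ≤ β) (m : ℕ) :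
    ∑ i ∈ Finset.range m, (if α ≤ s i ∧ s (i + 1) ≤ β then s (i + 1) - s i else 0) ≤ β - α := by
  set f : ℕ → ℝ := fun i => max α (min (s i) β) with hf
  have hmono : Monotone f := fun i j hij => max_le_max le_rfl (min_le_min (hs hij) le_rfl)
  have hterm : ∀ i, (if α ≤ s i ∧ s (i + 1) ≤ β then s (i + 1) - s i else 0) ≤ f (i + 1) - f i := by
    intro i
    by_cases h : α ≤ s i ∧ s (i + 1) ≤ β
    · have h1 : s i ≤ s (i + 1) := hs (Nat.le_succ i)
      have hfi : f i = s i := by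
        rw [hf]; simp only
        rw [min_eq_left (h1.trans h.2), max_eq_right h.1]
      have hfi1 : f (i + 1) = s (i + 1) := by
        rw [hf]; simp only
        rw [min_eq_left h.2, max_eq_right (h.1.trans h1)]
      rw [if_pos h, hfi, hfi1]
    · rw [if_neg h]
      linarith [hmono (Nat.le_succ i)]
  calc ∑ i ∈ Finset.range m, (if α ≤ s i ∧ s (i + 1) ≤ β then s (i + 1) - s i else 0)
      ≤ ∑ i ∈ Finset.range m, (f (i + 1) - f i) := Finset.sum_le_sum fun i _ => hterm i
    _ = f m - f 0 := Finset.sum_range_sub f m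
    _ ≤ β - α := by
        have h1 : f m ≤ β := max_le hαβ (min_le_right _ _)
        have h2 : α ≤ f 0 := le_max_left _ _
        linarith

lemma mem_groundEdges {G : SimpleGraph V} {V₁ V₂ : Finset V} {e : Sym2 V} :
    e ∈ groundEdges G V₁ V₂ ↔ e ∈ G.edgeSet ∧ ∃ v ∈ e, v ∉ V₁ ∧ v ∉ V₂ := by
  classical
  simp only [groundEdges, Finset.mem_filter, Finset.mem_univ, true_and]

lemma groundEdges_adj {G : SimpleGraph V} {V₁ V₂ : Finset V} {x y : V}
    (h : s(x, y) ∈ groundEdges G V₁ V₂) : G.Adj x y :=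
  (mem_groundEdges.1 h).1

lemma pairing_ge_one {G : SimpleGraph V} {V₁ V₂ : Finset V} {μ : Sym2 V → ℝ}
    (hdisj : Disjoint V₁ V₂)
    (hμ : ∀ e ∈ groundEdges G V₁ V₂, 0 < μ e)
    {w v : Sym2 V → ℝ} (hw0 : ∀ e, 0 ≤ w e) (hv0 : ∀ e, 0 ≤ v e)
    (hw : ∀ q ∈ cutSets G V₁ V₂, 1 ≤ ∑ e ∈ q, w e)
    (hv : ∀ p ∈ pathSets G V₁ V₂, 1 ≤ ∑ e ∈ p, μ e * v e) :
    1 ≤ ∑ e ∈ groundEdges G V₁ V₂, μ e * w e * v e := by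
  classical
  set E := groundEdges G V₁ V₂ with hE
  set ℓ : Sym2 V → ℝ := fun e => if e ∈ E then μ e * v e else 0 with hℓdef
  have hℓ : ∀ e, 0 ≤ ℓ e := by
    intro e; rw [hℓdef]; dsimp only
    split
    · exact mul_nonneg (hμ e (by assumption)).le (hv0 e)
    · exact le_refl 0
  have hfeas : ∀ p ∈ pathSets G V₁ V₂, 1 ≤ ∑ e ∈ p, ℓ e := by
    intro p hp
    refine (hv p hp).trans (le_of_eq (Finset.sum_congr rfl fun e hep => ?_).symm)
    rw [hℓdef]; dsimp only
    have hmem : e ∈ E := by rw [hE]; exact Finset.mem_coe.1 (hp.1 hep)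
    rw [if_pos hmem]
  -- the capped distance function
  set c : V → ℝ := fun x => min (dDist G V₁ E ℓ x) 1 with hcdef
  have hc0 : ∀ x, 0 ≤ c x := fun x => le_min (dDist_nonneg hℓ x) zero_le_one
  have hc1 : ∀ x, c x ≤ 1 := fun x => min_le_right _ _
  have hcV₁ : ∀ a ∈ V₁, c a = 0 := by
    intro a ha; rw [hcdef]; dsimp only
    rw [dDist_of_mem_V₁ hℓ ha]
    simp
  have hcV₂ : ∀ b ∈ V₂, c b = 1 := by
    intro b hb; rw [hcdef]; dsimp only
    rw [min_eq_right (dDist_of_mem_V₂ hℓ hdisj hfeas hb)]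
  have hcLip : ∀ x y : V, s(x, y) ∈ E → c y ≤ c x + ℓ s(x, y) := by
    intro x y he
    have hadj : G.Adj x y := groundEdges_adj he
    by_cases hdx : (1 : ℝ) ≤ dDist G V₁ E ℓ x
    · have : c x = 1 := min_eq_right hdx
      rw [this]
      linarith [hc1 y, hℓ s(x, y)]
    · push_neg at hdx
      have hreach : dReach G V₁ E x := by
        by_contra hnr
        rw [dDist, if_neg hnr] at hdx
        norm_num at hdx
      obtain ⟨-, hle⟩ := dDist_le_adj hℓ hadj he hreach
      have hcx : c x = dDist G V₁ E ℓ x := min_eq_left hdx.le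
      calc c y ≤ dDist G V₁ E ℓ y := min_le_left _ _
        _ ≤ dDist G V₁ E ℓ x + ℓ s(x, y) := hle
        _ = c x + ℓ s(x, y) := by rw [hcx]
  -- sorted level values
  set T : Finset ℝ := (Finset.image c Finset.univ) ∪ {0, 1} with hTdef
  have hT01 : ∀ r ∈ T, 0 ≤ r ∧ r ≤ 1 := by
    intro r hr
    rw [hTdef, Finset.mem_union] at hr
    rcases hr with hr | hr
    · obtain ⟨x, -, rfl⟩ := Finset.mem_image.1 hr
      exact ⟨hc0 x, hc1 x⟩
    · simp only [Finset.mem_insert, Finset.mem_singleton] at hr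
      rcases hr with rfl | rfl <;> norm_num
  have h0T : (0 : ℝ) ∈ T := by rw [hTdef]; simp
  have h1T : (1 : ℝ) ∈ T := by rw [hTdef]; simp
  have hcT : ∀ x, c x ∈ T := by
    intro x; rw [hTdef]
    exact Finset.mem_union_left _ (Finset.mem_image_of_mem c (Finset.mem_univ x))
  have hcard : 0 < T.card := Finset.card_pos.2 ⟨0, h0T⟩
  set t : Fin T.card ↪o ℝ := T.orderEmbOfFin rfl with htdef
  set s : ℕ → ℝ := fun i => if h : i < T.card then t ⟨i, h⟩ else 1 with hsdef
  have hsmem : ∀ i (h : i < T.card), s i = t ⟨i, h⟩ := by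
    intro i h; rw [hsdef]; dsimp only; rw [dif_pos h]
  have hsT : ∀ i, s i ∈ T := by
    intro i
    by_cases h : i < T.card
    · rw [hsmem i h]; exact Finset.orderEmbOfFin_mem T rfl _
    · rw [hsdef]; dsimp only; rw [dif_neg h]; exact h1T
  have hs0 : s 0 = 0 := by
    rw [hsmem 0 hcard, htdef, Finset.orderEmbOfFin_zero rfl hcard]
    refine le_antisymm (Finset.min'_le _ _ h0T) (Finset.le_min' _ _ _ fun r hr => (hT01 r hr).1)
  have hslast : s (T.card - 1) = 1 := by
    rw [hsmem _ (Nat.sub_lt hcard one_pos), htdef, Finset.orderEmbOfFin_last rfl hcard]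
    exact le_antisymm (Finset.max'_le _ _ _ fun r hr => (hT01 r hr).2) (Finset.le_max' _ _ h1T)
  have hsle1 : ∀ i, s i ≤ 1 := fun i => (hT01 _ (hsT i)).2
  have hsmono : Monotone s := by
    intro i j hij
    by_cases hj : j < T.card
    · have hi : i < T.card := lt_of_le_of_lt hij hj
      rw [hsmem i hi, hsmem j hj]
      exact t.monotone (Fin.mk_le_mk.2 hij)
    · rw [hsdef]; dsimp only
      rw [dif_neg hj]
      split
      · exact (hT01 _ (Finset.orderEmbOfFin_mem T rfl _)).2
      · exact le_rfl
  have hnext : ∀ u ∈ T, ∀ i : ℕ, s i < u → s (i + 1) ≤ u := by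
    intro u hu i hlt
    obtain ⟨j, hj⟩ : ∃ j : Fin T.card, t j = u := by
      have : u ∈ Set.range t := by rw [htdef, Finset.range_orderEmbOfFin]; exact hu
      exact this
    have hi : i < T.card := by
      by_contra h
      have : s i = 1 := by rw [hsdef]; dsimp only; rw [dif_neg h]
      rw [this] at hlt
      exact absurd ((hT01 u hu).2) (not_le.2 hlt)
    by_cases h1 : i + 1 < T.card
    · rw [hsmem _ h1]
      rw [hsmem _ hi, ← hj] at hlt
      have : (⟨i, hi⟩ : Fin T.card) < j := t.strictMono.lt_iff_lt.1 hlt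
      have hij : i + 1 ≤ (j : ℕ) := this
      rw [← hj]
      exact t.monotone (Fin.mk_le_mk.2 hij)
    · exfalso
      have hieq : i = T.card - 1 := by omega
      rw [hsmem _ hi] at hlt
      have : t ⟨i, hi⟩ = 1 := by
        have := hslast
        rw [hsmem _ (Nat.sub_lt hcard one_pos)] at this
        simpa [hieq] using this
      rw [this] at hlt
      exact absurd ((hT01 u hu).2) (not_le.2 hlt)
  -- the level cuts
  set Q : ℕ → Finset (Sym2 V) :=
    fun i => E.filter (fun e => ∃ x y, e = s(x, y) ∧ c x ≤ s i ∧ s (i + 1) ≤ c y) with hQdef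
  have hQcut : ∀ i : ℕ, s i < s (i + 1) → Q i ∈ cutSets G V₁ V₂ := by
    intro i hslt
    constructor
    · intro e he
      rw [← hE]
      exact Finset.mem_coe.2 (Finset.mem_of_mem_filter e (by rw [hQdef] at he; exact he))
    · rintro p ⟨hpE, a, ha, b, hb, W, hWpath, rfl⟩
      have hWE : ∀ e ∈ W.edges, e ∈ E := by
        intro e he
        rw [hE]
        exact Finset.mem_coe.1 (hpE (Finset.mem_coe.2 (List.mem_toFinset.2 he)))
      have cross : ∀ (x y : V) (W' : G.Walk x y), (∀ e ∈ W'.edges, e ∈ E) →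
          c x ≤ s i → s (i + 1) ≤ c y → ∃ e ∈ W'.edges, e ∈ Q i := by
        intro x y W'
        induction W' with
        | nil =>
          intro _ hx hy
          exact absurd (hy.trans hx) (not_le.2 hslt)
        | @cons x' z y' hadj W'' ih =>
          intro hWE' hx hy
          have heE : s(x', z) ∈ E := hWE' _ (by rw [SimpleGraph.Walk.edges_cons]; exact List.mem_cons_self)
          by_cases hz : c z ≤ s i
          · obtain ⟨e, he1, he2⟩ := ih (fun e he => hWE' e (by rw [SimpleGraph.Walk.edges_cons]; exact List.mem_cons_of_mem _ he)) hz hy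
            exact ⟨e, by rw [SimpleGraph.Walk.edges_cons]; exact List.mem_cons_of_mem _ he1, he2⟩
          · push_neg at hz
            have hz' : s (i + 1) ≤ c z := hnext _ (hcT z) i hz
            refine ⟨s(x', z), by rw [SimpleGraph.Walk.edges_cons]; exact List.mem_cons_self, ?_⟩
            rw [hQdef]
            exact Finset.mem_filter.2 ⟨heE, x', z, rfl, hx, hz'⟩
      obtain ⟨e, he1, he2⟩ := cross a b W hWE
        (by rw [hcV₁ a ha]; exact (hT01 _ (hsT i)).1)
        (by rw [hcV₂ b hb]; exact hsle1 _)
      exact ⟨e, Finset.mem_inter.2 ⟨List.mem_toFinset.2 he1, he2⟩⟩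
  -- main computation
  set m := T.card - 1 with hm
  have hΔnn : ∀ i, 0 ≤ s (i + 1) - s i := fun i => sub_nonneg.2 (hsmono (Nat.le_succ i))
  have hQsum : ∀ i, ∑ e ∈ Q i, w e = ∑ e ∈ E, (if (∃ x y, e = s(x, y) ∧ c x ≤ s i ∧ s (i + 1) ≤ c y) then w e else 0) := by
    intro i
    rw [hQdef]
    exact Finset.sum_filter _ _
  have hkey : ∀ e, e ∈ E →
      (∑ i ∈ Finset.range m, (if (∃ x y, e = s(x, y) ∧ c x ≤ s i ∧ s (i + 1) ≤ c y) then s (i + 1) - s i else 0)) ≤ ℓ e := by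
    intro e
    induction e using Sym2.ind with
    | _ x₀ y₀ =>
      intro he
      have hαβ : min (c x₀) (c y₀) ≤ max (c x₀) (c y₀) := min_le_max
      have hβα : max (c x₀) (c y₀) - min (c x₀) (c y₀) ≤ ℓ s(x₀, y₀) := by
        have l1 : c y₀ ≤ c x₀ + ℓ s(x₀, y₀) := hcLip x₀ y₀ he
        have l2 : c x₀ ≤ c y₀ + ℓ s(y₀, x₀) := hcLip y₀ x₀ (by rwa [Sym2.eq_swap])
        rw [Sym2.eq_swap] at l2
        rcases le_total (c x₀) (c y₀) with h | h
        · rw [max_eq_right h, min_eq_left h]; linarith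
        · rw [max_eq_left h, min_eq_right h]; linarith
      refine le_trans (Finset.sum_le_sum fun i _ => ?_)
        ((clamp_telescope s hsmono hαβ m).trans hβα)
      by_cases hp : (∃ x y, s(x₀, y₀) = s(x, y) ∧ c x ≤ s i ∧ s (i + 1) ≤ c y)
      · rw [if_pos hp]
        obtain ⟨x, y, heq, hx, hy⟩ := hp
        have hcond : min (c x₀) (c y₀) ≤ s i ∧ s (i + 1) ≤ max (c x₀) (c y₀) := by
          rcases Sym2.eq_iff.1 heq with ⟨rfl, rfl⟩ | ⟨rfl, rfl⟩
          · exact ⟨(min_le_left _ _).trans hx, hy.trans (le_max_right _ _)⟩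
          · exact ⟨(min_le_right _ _).trans hx, hy.trans (le_max_left _ _)⟩
        rw [if_pos hcond]
      · rw [if_neg hp]
        split
        · exact hΔnn i
        · exact le_rfl
  have step1 : (1 : ℝ) = ∑ i ∈ Finset.range m, (s (i + 1) - s i) := by
    rw [Finset.sum_range_sub s m, hm, hslast, hs0]
    norm_num
  have step2 : ∑ i ∈ Finset.range m, (s (i + 1) - s i)
      ≤ ∑ i ∈ Finset.range m, (s (i + 1) - s i) * ∑ e ∈ Q i, w e := by
    refine Finset.sum_le_sum fun i _ => ?_
    rcases eq_or_lt_of_le (hsmono (Nat.le_succ i)) with heq | hlt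
    · rw [← heq]; simp
    · exact le_mul_of_one_le_right (hΔnn i) (hw _ (hQcut i hlt))
  have step3 : ∑ i ∈ Finset.range m, (s (i + 1) - s i) * ∑ e ∈ Q i, w e
      = ∑ e ∈ E, ∑ i ∈ Finset.range m, (s (i + 1) - s i) * (if (∃ x y, e = s(x, y) ∧ c x ≤ s i ∧ s (i + 1) ≤ c y) then w e else 0) := by
    calc ∑ i ∈ Finset.range m, (s (i + 1) - s i) * ∑ e ∈ Q i, w e
        = ∑ i ∈ Finset.range m, ∑ e ∈ E, (s (i + 1) - s i) * (if (∃ x y, e = s(x, y) ∧ c x ≤ s i ∧ s (i + 1) ≤ c y) then w e else 0) := by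
          refine Finset.sum_congr rfl fun i _ => ?_
          rw [hQsum i, Finset.mul_sum]
      _ = ∑ e ∈ E, ∑ i ∈ Finset.range m, (s (i + 1) - s i) * (if (∃ x y, e = s(x, y) ∧ c x ≤ s i ∧ s (i + 1) ≤ c y) then w e else 0) :=
          Finset.sum_comm
  have step4 : ∑ e ∈ E, ∑ i ∈ Finset.range m, (s (i + 1) - s i) * (if (∃ x y, e = s(x, y) ∧ c x ≤ s i ∧ s (i + 1) ≤ c y) then w e else 0)
      ≤ ∑ e ∈ E, μ e * w e * v e := by
    refine Finset.sum_le_sum fun e he => ?_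
    have h1 : ∑ i ∈ Finset.range m, (s (i + 1) - s i) * (if (∃ x y, e = s(x, y) ∧ c x ≤ s i ∧ s (i + 1) ≤ c y) then w e else 0)
        = w e * ∑ i ∈ Finset.range m, (if (∃ x y, e = s(x, y) ∧ c x ≤ s i ∧ s (i + 1) ≤ c y) then s (i + 1) - s i else 0) := by
      rw [Finset.mul_sum]
      refine Finset.sum_congr rfl fun i _ => ?_
      split_ifs <;> ring
    rw [h1]
    have h3 : w e * (∑ i ∈ Finset.range m, (if (∃ x y, e = s(x, y) ∧ c x ≤ s i ∧ s (i + 1) ≤ c y) then s (i + 1) - s i else 0)) ≤ w e * ℓ e :=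
      mul_le_mul_of_nonneg_left (hkey e he) (hw0 e)
    refine h3.trans (le_of_eq ?_)
    rw [hℓdef]; dsimp only
    rw [if_pos he]
    ring
  calc (1 : ℝ) = ∑ i ∈ Finset.range m, (s (i + 1) - s i) := step1
    _ ≤ ∑ i ∈ Finset.range m, (s (i + 1) - s i) * ∑ e ∈ Q i, w e := step2
    _ = ∑ e ∈ E, ∑ i ∈ Finset.range m, (s (i + 1) - s i) * (if (∃ x y, e = s(x, y) ∧ c x ≤ s i ∧ s (i + 1) ≤ c y) then w e else 0) := step3
    _ ≤ ∑ e ∈ E, μ e * w e * v e := step4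


lemma product_ge_one {G : SimpleGraph V} {V₁ V₂ : Finset V} {μ : Sym2 V → ℝ}
    (hdisj : Disjoint V₁ V₂)
    (hμ : ∀ e ∈ groundEdges G V₁ V₂, 0 < μ e)
    {w v : Sym2 V → ℝ}
    (hw : ∀ q ∈ cutSets G V₁ V₂, 1 ≤ ∑ e ∈ q, w e)
    (hv : ∀ p ∈ pathSets G V₁ V₂, 1 ≤ ∑ e ∈ p, μ e * v e) :
    1 ≤ (∑ e ∈ groundEdges G V₁ V₂, μ e * w e ^ 2) *
        (∑ e ∈ groundEdges G V₁ V₂, μ e * v e ^ 2) := by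
  classical
  set E := groundEdges G V₁ V₂ with hE
  have hw' : ∀ q ∈ cutSets G V₁ V₂, 1 ≤ ∑ e ∈ q, |w e| :=
    fun q hq => (hw q hq).trans (Finset.sum_le_sum fun e _ => le_abs_self _)
  have hv' : ∀ p ∈ pathSets G V₁ V₂, 1 ≤ ∑ e ∈ p, μ e * |v e| := by
    intro p hp
    refine (hv p hp).trans (Finset.sum_le_sum fun e hep => ?_)
    have hmem : e ∈ E := by rw [hE]; exact Finset.mem_coe.1 (hp.1 hep)
    exact mul_le_mul_of_nonneg_left (le_abs_self _) (hμ e hmem).le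
  have hpair : 1 ≤ ∑ e ∈ E, μ e * |w e| * |v e| :=
    pairing_ge_one hdisj hμ (fun e => abs_nonneg _) (fun e => abs_nonneg _) hw' hv'
  have hCS := Finset.sum_mul_sq_le_sq_mul_sq E
    (fun e => Real.sqrt (μ e) * |w e|) (fun e => Real.sqrt (μ e) * |v e|)
  have h1 : ∑ e ∈ E, (Real.sqrt (μ e) * |w e|) * (Real.sqrt (μ e) * |v e|)
      = ∑ e ∈ E, μ e * |w e| * |v e| := by
    refine Finset.sum_congr rfl fun e he => ?_
    rw [show (Real.sqrt (μ e) * |w e|) * (Real.sqrt (μ e) * |v e|)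
        = (Real.sqrt (μ e) * Real.sqrt (μ e)) * (|w e| * |v e|) by ring,
      Real.mul_self_sqrt (hμ e he).le]
    ring
  have h2 : ∑ e ∈ E, (Real.sqrt (μ e) * |w e|) ^ 2 = ∑ e ∈ E, μ e * w e ^ 2 := by
    refine Finset.sum_congr rfl fun e he => ?_
    rw [mul_pow, Real.sq_sqrt (hμ e he).le, sq_abs]
  have h3 : ∑ e ∈ E, (Real.sqrt (μ e) * |v e|) ^ 2 = ∑ e ∈ E, μ e * v e ^ 2 := by
    refine Finset.sum_congr rfl fun e he => ?_
    rw [mul_pow, Real.sq_sqrt (hμ e he).le, sq_abs]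
  rw [h1, h2, h3] at hCS
  nlinarith [hpair, hCS]

lemma pathSets_edge_nonempty {G : SimpleGraph V} {V₁ V₂ : Finset V}
    (hdisj : Disjoint V₁ V₂) {p : Finset (Sym2 V)} (hp : p ∈ pathSets G V₁ V₂) : p.Nonempty := by
  obtain ⟨-, a, ha, b, hb, W, -, rfl⟩ := hp
  have hab : a ≠ b := fun h => Finset.disjoint_left.1 hdisj ha (h ▸ hb)
  cases W with
  | nil => exact absurd rfl hab
  | cons h W' =>
    exact ⟨_, List.mem_toFinset.2 (by rw [SimpleGraph.Walk.edges_cons]; exact List.mem_cons_self)⟩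

/-- The discrete extremal length between `V₁` and `V₂` with resistances `μ`. -/
noncomputable def discreteEL (G : SimpleGraph V) (V₁ V₂ : Finset V) (μ : Sym2 V → ℝ) : ℝ :=
  sInf {x : ℝ | ∃ w : Sym2 V → ℝ,
    (∀ q ∈ cutSets G V₁ V₂, 1 ≤ ∑ e ∈ q, w e) ∧
    x = ∑ e ∈ groundEdges G V₁ V₂, μ e * w e ^ 2}

/-- The discrete extremal width between `V₁` and `V₂` with resistances `μ`. -/
noncomputable def discreteEW (G : SimpleGraph V) (V₁ V₂ : Finset V) (μ : Sym2 V → ℝ) : ℝ :=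
  sInf {x : ℝ | ∃ w : Sym2 V → ℝ,
    (∀ p ∈ pathSets G V₁ V₂, 1 ≤ ∑ e ∈ p, μ e * w e) ∧
    x = ∑ e ∈ groundEdges G V₁ V₂, μ e * w e ^ 2}

/-- Duffin's reciprocity theorem: `EL(V₁,V₂,μ) · EW(V₁,V₂,μ) = 1`. -/
theorem duffin_reciprocity (G : SimpleGraph V) (V₁ V₂ : Finset V)
    (hdisj : Disjoint V₁ V₂) (h₁ : V₁.Nonempty) (h₂ : V₂.Nonempty)
    (hP : (pathSets G V₁ V₂).Nonempty)
    (μ : Sym2 V → ℝ) (hμ : ∀ e ∈ groundEdges G V₁ V₂, 0 < μ e) :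
    discreteEL G V₁ V₂ μ * discreteEW G V₁ V₂ μ = 1 := by
  classical
  set E := groundEdges G V₁ V₂ with hE
  set SL := {x : ℝ | ∃ w : Sym2 V → ℝ,
    (∀ q ∈ cutSets G V₁ V₂, 1 ≤ ∑ e ∈ q, w e) ∧
    x = ∑ e ∈ E, μ e * w e ^ 2} with hSL
  set SW := {x : ℝ | ∃ w : Sym2 V → ℝ,
    (∀ p ∈ pathSets G V₁ V₂, 1 ≤ ∑ e ∈ p, μ e * w e) ∧
    x = ∑ e ∈ E, μ e * w e ^ 2} with hSW
  have hELdef : discreteEL G V₁ V₂ μ = sInf SL := rfl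
  have hEWdef : discreteEW G V₁ V₂ μ = sInf SW := rfl
  obtain ⟨p₀, hp₀⟩ := hP
  have hq_ne : ∀ q ∈ cutSets G V₁ V₂, q.Nonempty := by
    intro q hq
    obtain ⟨e, he⟩ := hq.2 p₀ hp₀
    exact ⟨e, (Finset.mem_inter.1 he).2⟩
  -- a feasible element of SL
  have hx₀ : (∑ e ∈ E, μ e * (1 : ℝ) ^ 2) ∈ SL := by
    refine ⟨fun _ => 1, fun q hq => ?_, rfl⟩
    rw [Finset.sum_const, nsmul_eq_mul, mul_one]
    exact_mod_cast Finset.card_pos.2 (hq_ne q hq)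
  set x₀ := ∑ e ∈ E, μ e * (1 : ℝ) ^ 2 with hx₀def
  -- a feasible element of SW
  set v₀ : Sym2 V → ℝ := fun e => if e ∈ E then (μ e)⁻¹ else 0 with hv₀
  have hy₀ : (∑ e ∈ E, μ e * v₀ e ^ 2) ∈ SW := by
    refine ⟨v₀, fun p hp => ?_, rfl⟩
    have hsub : ∀ e ∈ p, e ∈ E := fun e hep => by
      rw [hE]; exact Finset.mem_coe.1 (hp.1 hep)
    have hcalc : ∑ e ∈ p, μ e * v₀ e = (p.card : ℝ) := by
      rw [Finset.card_eq_sum_ones, Nat.cast_sum]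
      refine Finset.sum_congr rfl fun e hep => ?_
      rw [hv₀]; dsimp only
      rw [if_pos (hsub e hep), mul_inv_cancel₀ (hμ e (hsub e hep)).ne']
      norm_num
    rw [hcalc]
    exact_mod_cast Finset.card_pos.2 (pathSets_edge_nonempty hdisj hp)
  set y₀ := ∑ e ∈ E, μ e * v₀ e ^ 2 with hy₀def
  have hSLlb : ∀ x ∈ SL, 0 ≤ x := by
    rintro x ⟨w, -, rfl⟩
    exact Finset.sum_nonneg fun e he => mul_nonneg (hμ e he).le (sq_nonneg _)
  have hSWlb : ∀ x ∈ SW, 0 ≤ x := by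
    rintro x ⟨w, -, rfl⟩
    exact Finset.sum_nonneg fun e he => mul_nonneg (hμ e he).le (sq_nonneg _)
  have hbddL : BddBelow SL := ⟨0, hSLlb⟩
  have hbddW : BddBelow SW := ⟨0, hSWlb⟩
  have hprod : ∀ x ∈ SL, ∀ y ∈ SW, 1 ≤ x * y := by
    rintro x ⟨w, hw, rfl⟩ y ⟨v, hv, rfl⟩
    exact product_ge_one hdisj hμ hw hv
  set L := sInf SL with hLdef
  have hy₀pos : 0 < y₀ := by
    rcases (hSWlb _ hy₀).lt_or_eq with h | h
    · exact h
    · exfalso; have := hprod x₀ hx₀ y₀ hy₀; rw [← h] at this; nlinarith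
  have hLlb : ∀ x ∈ SL, 1 / y₀ ≤ x := by
    intro x hx
    rw [div_le_iff₀ hy₀pos]
    exact hprod x hx y₀ hy₀
  have hLpos : 0 < L := lt_of_lt_of_le (by positivity) (le_csInf ⟨x₀, hx₀⟩ hLlb)
  have hEWge : 1 / L ≤ sInf SW := by
    refine le_csInf ⟨y₀, hy₀⟩ fun y hy => ?_
    have hypos : 0 < y := by
      rcases (hSWlb _ hy).lt_or_eq with h | h
      · exact h
      · exfalso; have := hprod x₀ hx₀ y hy; rw [← h] at this; nlinarith [hSLlb x₀ hx₀]
    have hLy : 1 / y ≤ L := le_csInf ⟨x₀, hx₀⟩ fun x hx => by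
      rw [div_le_iff₀ hypos]; exact hprod x hx y hy
    rw [div_le_iff₀ hLpos]
    have := (div_le_iff₀ hypos).1 hLy
    linarith [this]
  -- key epsilon estimate
  set M := ∑ e ∈ E, μ e with hM
  have hM0 : 0 ≤ M := Finset.sum_nonneg fun e he => (hμ e he).le
  set C := 2 * M + 2 * (L + 1) with hC
  have hC0 : 0 < C := by rw [hC]; nlinarith
  have key : ∀ ε : ℝ, 0 < ε → ε ≤ 1 → Real.sqrt ε * (1 + C) / 2 < L →
      sInf SW ≤ (L + ε) / (L - Real.sqrt ε * (1 + C) / 2) ^ 2 := by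
    intro ε hε hε1 hδL
    set τ := Real.sqrt ε with hτ
    have hτpos : 0 < τ := Real.sqrt_pos.2 hε
    have hτ1 : τ ≤ 1 := by
      rw [hτ, show (1 : ℝ) = Real.sqrt 1 by simp]
      exact Real.sqrt_le_sqrt hε1
    have hτsq : τ ^ 2 = ε := Real.sq_sqrt hε.le
    set δ := τ * (1 + C) / 2 with hδdef
    have hLδ : 0 < L - δ := sub_pos.2 hδL
    obtain ⟨x, hxSL, hxlt⟩ : ∃ x ∈ SL, x < L + ε :=
      (csInf_lt_iff hbddL ⟨x₀, hx₀⟩).1 (by linarith)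
    have hxL : L ≤ x := csInf_le hbddL hxSL
    obtain ⟨w, hwfeas, hxdef⟩ := hxSL
    set w' : Sym2 V → ℝ := fun e => |w e| with hw'
    have hw'feas : ∀ q ∈ cutSets G V₁ V₂, 1 ≤ ∑ e ∈ q, w' e :=
      fun q hq => (hwfeas q hq).trans (Finset.sum_le_sum fun e _ => le_abs_self _)
    have hxw' : x = ∑ e ∈ E, μ e * w' e ^ 2 := by
      rw [hxdef]
      exact Finset.sum_congr rfl fun e _ => by rw [hw']; dsimp only; rw [sq_abs]
    have hpath : ∀ p ∈ pathSets G V₁ V₂, L - δ ≤ ∑ e ∈ p, μ e * w' e := by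
      intro p hp
      set χ : Sym2 V → ℝ := fun e => if e ∈ p then (1 : ℝ) else 0 with hχ
      set u : Sym2 V → ℝ := fun e => (1 - τ) * w' e + τ * χ e with hu
      have hufeas : ∀ q ∈ cutSets G V₁ V₂, 1 ≤ ∑ e ∈ q, u e := by
        intro q hq
        have h1 : ∑ e ∈ q, u e = (1 - τ) * ∑ e ∈ q, w' e + τ * ∑ e ∈ q, χ e := by
          rw [Finset.mul_sum, Finset.mul_sum, ← Finset.sum_add_distrib]
        have hχq : 1 ≤ ∑ e ∈ q, χ e := by
          obtain ⟨e₁, he₁⟩ := hq.2 p hp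
          have he₁' := Finset.mem_inter.1 he₁
          calc (1 : ℝ) = ∑ e ∈ {e₁}, χ e := by
                rw [Finset.sum_singleton, hχ]; dsimp only; rw [if_pos he₁'.1]
            _ ≤ ∑ e ∈ q, χ e := by
                refine Finset.sum_le_sum_of_subset_of_nonneg
                  (Finset.singleton_subset_iff.2 he₁'.2) fun e _ _ => ?_
                rw [hχ]; dsimp only; split <;> norm_num
        have h2 : (1 - τ) * 1 ≤ (1 - τ) * ∑ e ∈ q, w' e :=
          mul_le_mul_of_nonneg_left (hw'feas q hq) (by linarith)
        have h3 : τ * 1 ≤ τ * ∑ e ∈ q, χ e := mul_le_mul_of_nonneg_left hχq hτpos.le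
        rw [h1]; linarith
      have hQu : L ≤ ∑ e ∈ E, μ e * u e ^ 2 := csInf_le hbddL ⟨u, hufeas, rfl⟩
      have hexp : ∑ e ∈ E, μ e * u e ^ 2
          = x + 2 * τ * ((∑ e ∈ E, μ e * w' e * χ e) - x)
            + τ ^ 2 * (∑ e ∈ E, μ e * (χ e - w' e) ^ 2) := by
        calc ∑ e ∈ E, μ e * u e ^ 2
            = ∑ e ∈ E, (μ e * w' e ^ 2 + 2 * τ * (μ e * w' e * χ e - μ e * w' e ^ 2)
                + τ ^ 2 * (μ e * (χ e - w' e) ^ 2)) :=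
              Finset.sum_congr rfl fun e _ => by rw [hu]; dsimp only; ring
          _ = (∑ e ∈ E, μ e * w' e ^ 2)
                + 2 * τ * ((∑ e ∈ E, μ e * w' e * χ e) - ∑ e ∈ E, μ e * w' e ^ 2)
                + τ ^ 2 * (∑ e ∈ E, μ e * (χ e - w' e) ^ 2) := by
              rw [Finset.sum_add_distrib, Finset.sum_add_distrib, ← Finset.mul_sum,
                ← Finset.mul_sum, Finset.sum_sub_distrib]
          _ = _ := by rw [← hxw']
      have hA : ∑ e ∈ E, μ e * w' e * χ e = ∑ e ∈ p, μ e * w' e := by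
        calc ∑ e ∈ E, μ e * w' e * χ e
            = ∑ e ∈ E, (if e ∈ p then μ e * w' e else 0) := by
              refine Finset.sum_congr rfl fun e _ => ?_
              rw [hχ]; dsimp only; split <;> simp
          _ = ∑ e ∈ E ∩ p, μ e * w' e := Finset.sum_ite_mem E p _
          _ = ∑ e ∈ p, μ e * w' e := by
              rw [Finset.inter_eq_right.2 fun e hep => by
                rw [hE]; exact Finset.mem_coe.1 (hp.1 hep)]
      have hD : ∑ e ∈ E, μ e * (χ e - w' e) ^ 2 ≤ C := by
        have hχsq : ∀ e ∈ E, μ e * χ e ^ 2 ≤ μ e := by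
          intro e he
          rw [hχ]; dsimp only
          split <;> simp [(hμ e he).le]
        have h4 : ∑ e ∈ E, μ e * (χ e - w' e) ^ 2
            ≤ ∑ e ∈ E, (2 * (μ e * χ e ^ 2) + 2 * (μ e * w' e ^ 2)) := by
          refine Finset.sum_le_sum fun e he => ?_
          nlinarith [hμ e he, sq_nonneg (χ e + w' e)]
        have h5 : ∑ e ∈ E, (2 * (μ e * χ e ^ 2) + 2 * (μ e * w' e ^ 2))
            = 2 * (∑ e ∈ E, μ e * χ e ^ 2) + 2 * (∑ e ∈ E, μ e * w' e ^ 2) := by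
          rw [Finset.sum_add_distrib, ← Finset.mul_sum, ← Finset.mul_sum]
        have h6 : ∑ e ∈ E, μ e * χ e ^ 2 ≤ M := Finset.sum_le_sum hχsq
        rw [hC]
        have h7 : ∑ e ∈ E, μ e * w' e ^ 2 ≤ L + 1 := by rw [← hxw']; linarith
        linarith [h4, h5.le, h6, h7]
      have hLu := hQu
      rw [hexp, hA] at hLu
      have h8 : τ ^ 2 * (∑ e ∈ E, μ e * (χ e - w' e) ^ 2) ≤ τ ^ 2 * C :=
        mul_le_mul_of_nonneg_left hD (sq_nonneg τ)
      have h9 : 0 ≤ τ * (x - L) := mul_nonneg hτpos.le (by linarith)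
      rw [hδdef]
      nlinarith [hLu, h8, hxlt, hxL, hτsq, h9, hτpos]
    have hyval : ∑ e ∈ E, μ e * (w' e / (L - δ)) ^ 2 = x / (L - δ) ^ 2 := by
      rw [hxw', Finset.sum_div]
      exact Finset.sum_congr rfl fun e _ => by rw [div_pow]; ring
    have hymem : x / (L - δ) ^ 2 ∈ SW := by
      refine ⟨fun e => w' e / (L - δ), fun p hp => ?_, hyval.symm⟩
      have h10 : ∑ e ∈ p, μ e * (w' e / (L - δ)) = (∑ e ∈ p, μ e * w' e) / (L - δ) := by
        rw [Finset.sum_div]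
        exact Finset.sum_congr rfl fun e _ => by rw [mul_div_assoc]
      rw [h10, le_div_iff₀ hLδ, one_mul]
      exact hpath p hp
    calc sInf SW ≤ x / (L - δ) ^ 2 := csInf_le hbddW hymem
      _ ≤ (L + ε) / (L - δ) ^ 2 := by
          apply div_le_div_of_nonneg_right hxlt.le (by positivity) |>.trans_eq rfl
  -- limit argument: sInf SW ≤ 1 / L
  have hEWle : sInf SW ≤ 1 / L := by
    have hδf0 : Filter.Tendsto (fun n : ℕ => Real.sqrt (1 / ((n : ℝ) + 1)) * (1 + C) / 2)
        Filter.atTop (nhds 0) := by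
      have h1 : Filter.Tendsto (fun n : ℕ => 1 / ((n : ℝ) + 1)) Filter.atTop (nhds 0) :=
        tendsto_one_div_add_atTop_nhds_zero_nat
      have h2 : Filter.Tendsto (fun n : ℕ => Real.sqrt (1 / ((n : ℝ) + 1)))
          Filter.atTop (nhds 0) := by
        have := (Real.continuous_sqrt.tendsto 0).comp h1
        simp only [Function.comp_def, Real.sqrt_zero] at this
        exact this
      have := (h2.mul_const (1 + C)).div_const 2
      simpa using this
    have hfl : Filter.Tendsto
        (fun n : ℕ => (L + 1 / ((n : ℝ) + 1)) /
          (L - Real.sqrt (1 / ((n : ℝ) + 1)) * (1 + C) / 2) ^ 2)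
        Filter.atTop (nhds (1 / L)) := by
      have h1 : Filter.Tendsto (fun n : ℕ => L + 1 / ((n : ℝ) + 1)) Filter.atTop (nhds (L + 0)) :=
        tendsto_const_nhds.add tendsto_one_div_add_atTop_nhds_zero_nat
      have h2 : Filter.Tendsto
          (fun n : ℕ => (L - Real.sqrt (1 / ((n : ℝ) + 1)) * (1 + C) / 2) ^ 2)
          Filter.atTop (nhds ((L - 0) ^ 2)) :=
        (tendsto_const_nhds.sub hδf0).pow 2
      have h3 := h1.div h2 (by
        rw [sub_zero]
        positivity)
      have h4 : (L + 0) / (L - 0) ^ 2 = 1 / L := by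
        rw [add_zero, sub_zero]
        field_simp
      rw [h4] at h3
      exact h3
    refine ge_of_tendsto hfl ?_
    have hev1 : ∀ᶠ n : ℕ in Filter.atTop,
        Real.sqrt (1 / ((n : ℝ) + 1)) * (1 + C) / 2 < L := hδf0.eventually_lt_const hLpos
    filter_upwards [hev1] with n hn
    have hn1 : (0 : ℝ) < (n : ℝ) + 1 := by positivity
    have hle1 : 1 / ((n : ℝ) + 1) ≤ 1 := by
      have h11 : (1 : ℝ) ≤ (n : ℝ) + 1 := by linarith [(Nat.cast_nonneg n : (0:ℝ) ≤ (n:ℝ))]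
      calc 1 / ((n : ℝ) + 1) ≤ 1 / 1 := by gcongr
        _ = 1 := by norm_num
    exact key (1 / ((n : ℝ) + 1)) (by positivity) hle1 hn
  rw [hELdef, hEWdef]
  have hf1 : L * (1 / L) = 1 := by field_simp
  have h1 : L * sInf SW ≤ 1 := by
    calc L * sInf SW ≤ L * (1 / L) := mul_le_mul_of_nonneg_left hEWle hLpos.le
      _ = 1 := hf1
  have h2 : 1 ≤ L * sInf SW := by
    calc (1 : ℝ) = L * (1 / L) := hf1.symm
      _ ≤ L * sInf SW := mul_le_mul_of_nonneg_left hEWge hLpos.le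
  linarith
end

section
/- Let T be a geodesic triangulation of the plane by φ, with all triangle images contained in the disk D_R of radius R, each triangle having all angles ≥ ε, and with triangle interiors pairwise disjoint. Then Σ_e l_e² ≤ (3/sin²ε)·πR², where the sum is over edges e both of whose adjacent triangles lie in D_R, and l_e is the Euclidean length of e. -/
open EuclideanGeometry MeasureTheory Finset
open scoped EuclideanGeometry

section Aux
open Pointwise
open scoped ENNReal
local notation "E2" => EuclideanSpace ℝ (Fin 2)

noncomputable def Mmap (u v : E2) : E2 →ₗ[ℝ] E2 where
  toFun x := x 0 • u + x 1 • v
  map_add' x y := by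
    show (x + y) 0 • u + (x + y) 1 • v = _
    simp [add_smul]; module
  map_smul' c x := by
    show (c • x) 0 • u + (c • x) 1 • v = _
    simp [mul_smul]

lemma Mmap_det (u v : E2) : LinearMap.det (Mmap u v) = u 0 * v 1 - u 1 * v 0 := by
  rw [← LinearMap.det_toMatrix (EuclideanSpace.basisFun (Fin 2) ℝ).toBasis, Matrix.det_fin_two]
  simp [LinearMap.toMatrix_apply, Mmap, EuclideanSpace.basisFun_apply]
  ring

noncomputable def cubeS : Set E2 :=
  (MeasurableEquiv.toLp 2 (Fin 2 → ℝ)).symm ⁻¹' (Set.univ.pi fun _ => Set.Icc (0:ℝ) 1)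

lemma cubeS_mem (x : E2) : x ∈ cubeS ↔ x 0 ∈ Set.Icc (0:ℝ) 1 ∧ x 1 ∈ Set.Icc (0:ℝ) 1 := by
  simp only [cubeS, Set.mem_preimage, Set.mem_pi, Set.mem_univ, forall_true_left]
  constructor
  · exact fun hx => ⟨hx 0, hx 1⟩
  · rintro ⟨h0, h1⟩ i; fin_cases i <;> assumption

lemma cubeS_vol : volume cubeS = 1 := by
  rw [cubeS, (EuclideanSpace.volume_preserving_symm_measurableEquiv_toLp (Fin 2)).measure_preimage
    (MeasurableSet.univ_pi fun _ => measurableSet_Icc).nullMeasurableSet,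
    volume_pi_pi]
  simp

lemma mem_tri (u v : E2) {s t : ℝ} (hs : 0 ≤ s) (ht : 0 ≤ t) (hst : s + t ≤ 1) :
    s • u + t • v ∈ convexHull ℝ ({0, u, v} : Set E2) := by
  set T := convexHull ℝ ({0, u, v} : Set E2)
  have c : Convex ℝ T := convex_convexHull ℝ _
  have h0 : (0:E2) ∈ T := subset_convexHull _ _ (by simp)
  have hu : u ∈ T := subset_convexHull _ _ (by simp)
  have hv : v ∈ T := subset_convexHull _ _ (by simp)
  rcases eq_or_lt_of_le (add_nonneg hs ht) with h | h
  · have hs0 : s = 0 := by linarith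
    have ht0 : t = 0 := by linarith
    simpa [hs0, ht0] using h0
  · have hQ : (s/(s+t)) • u + (t/(s+t)) • v ∈ T :=
      c hu hv (by positivity) (by positivity) (by field_simp)
    have := c hQ h0 (le_of_lt h) (by linarith) (by ring_nf : (s+t) + (1-(s+t)) = 1)
    simpa [smul_smul, smul_add, mul_div_cancel₀, ne_of_gt h] using this

lemma Mmap_apply (u v x : E2) : Mmap u v x = x 0 • u + x 1 • v := rfl

lemma cubeS_convex : Convex ℝ cubeS := by
  intro x hx y hy a b ha hb hab
  rw [cubeS_mem] at *
  have h0 : (a • x + b • y) 0 = a * x 0 + b * y 0 := by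
    simp [PiLp.add_apply, PiLp.smul_apply, smul_eq_mul]
  have h1 : (a • x + b • y) 1 = a * x 1 + b * y 1 := by
    simp [PiLp.add_apply, PiLp.smul_apply, smul_eq_mul]
  rw [h0, h1]
  exact ⟨convex_Icc 0 1 hx.1 hy.1 ha hb hab, convex_Icc 0 1 hx.2 hy.2 ha hb hab⟩

lemma tri_vol_upper (u v : E2) :
    volume (convexHull ℝ ({0, u, v} : Set E2)) ≤ ENNReal.ofReal |u 0 * v 1 - u 1 * v 0| := by
  have himg : convexHull ℝ ({0, u, v} : Set E2) ⊆ Mmap u v '' cubeS := by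
    apply convexHull_min _ (cubeS_convex.is_linear_image (Mmap u v).isLinear)
    rintro x (rfl | rfl | rfl)
    · exact ⟨0, by rw [cubeS_mem]; norm_num, by simp [Mmap_apply]⟩
    · refine ⟨EuclideanSpace.single 0 1, by rw [cubeS_mem]; simp, ?_⟩
      simp [Mmap_apply, EuclideanSpace.single_apply]
    · refine ⟨EuclideanSpace.single 1 1, by rw [cubeS_mem]; simp, ?_⟩
      simp [Mmap_apply, EuclideanSpace.single_apply]
  calc volume (convexHull ℝ ({0, u, v} : Set E2)) ≤ volume (Mmap u v '' cubeS) :=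
        measure_mono himg
    _ = ENNReal.ofReal |LinearMap.det (Mmap u v)| * volume cubeS :=
        Measure.addHaar_image_linearMap volume _ _
    _ = ENNReal.ofReal |u 0 * v 1 - u 1 * v 0| := by rw [Mmap_det, cubeS_vol, mul_one]

lemma tri_vol_lower (u v : E2) :
    ENNReal.ofReal (|u 0 * v 1 - u 1 * v 0| / 2) ≤
      volume (convexHull ℝ ({0, u, v} : Set E2)) := by
  set T := convexHull ℝ ({0, u, v} : Set E2) with hT
  have hsub : Mmap u v '' cubeS ⊆ T ∪ ((u + v) +ᵥ ((-1 : ℝ) • T)) := by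
    rintro _ ⟨x, hx, rfl⟩
    rw [cubeS_mem] at hx
    obtain ⟨⟨hs0, hs1⟩, ⟨ht0, ht1⟩⟩ := hx
    rw [Mmap_apply]
    rcases le_or_gt (x 0 + x 1) 1 with h | h
    · exact Or.inl (mem_tri u v hs0 ht0 h)
    · refine Or.inr ?_
      have hw : (1 - x 0) • u + (1 - x 1) • v ∈ T :=
        mem_tri u v (by linarith) (by linarith) (by linarith)
      refine ⟨(-1 : ℝ) • ((1 - x 0) • u + (1 - x 1) • v), Set.smul_mem_smul_set hw, ?_⟩
      show (u + v) + _ = _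
      simp only [smul_add, smul_smul, neg_one_mul, neg_smul, one_smul, sub_smul]
      module
  have hvol : volume (Mmap u v '' cubeS) = ENNReal.ofReal |u 0 * v 1 - u 1 * v 0| := by
    rw [Measure.addHaar_image_linearMap volume _ _, Mmap_det, cubeS_vol, mul_one]
  have h2 : volume ((u + v) +ᵥ ((-1 : ℝ) • T)) = volume T := by
    rw [measure_vadd, Measure.addHaar_smul]
    norm_num
  have key : ENNReal.ofReal |u 0 * v 1 - u 1 * v 0| ≤ 2 * volume T := by
    calc ENNReal.ofReal |u 0 * v 1 - u 1 * v 0| = volume (Mmap u v '' cubeS) := hvol.symm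
      _ ≤ volume (T ∪ ((u + v) +ᵥ ((-1 : ℝ) • T))) := measure_mono hsub
      _ ≤ volume T + volume ((u + v) +ᵥ ((-1 : ℝ) • T)) := measure_union_le _ _
      _ = 2 * volume T := by rw [h2, two_mul]
  have e : (2:ℝ≥0∞) * ENNReal.ofReal (|u 0 * v 1 - u 1 * v 0| / 2)
      = ENNReal.ofReal |u 0 * v 1 - u 1 * v 0| := by
    rw [show (2:ℝ≥0∞) * ENNReal.ofReal (|u 0 * v 1 - u 1 * v 0| / 2) = ENNReal.ofReal 2 * ENNReal.ofReal (|u 0 * v 1 - u 1 * v 0| / 2) by simp, ← ENNReal.ofReal_mul (by norm_num)]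
    rw [mul_div_cancel₀ _ (two_ne_zero)]
  exact (ENNReal.mul_le_mul_iff_right (two_ne_zero) (ENNReal.ofNat_ne_top)).mp (by rw [e]; exact key)

lemma sinmono {ε θ : ℝ} (hε : 0 < ε) (h1 : ε ≤ θ) (h2 : θ ≤ Real.pi - ε) :
    Real.sin ε ≤ Real.sin θ := by
  rcases le_or_gt θ (Real.pi/2) with h | h
  · exact Real.sin_le_sin_of_le_of_le_pi_div_two (by linarith) h h1
  · rw [← Real.sin_pi_sub θ]
    exact Real.sin_le_sin_of_le_of_le_pi_div_two (by linarith) (by linarith) (by linarith)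

lemma det_eq_sin (u v : E2) :
    Real.sin (InnerProductGeometry.angle u v) * (‖u‖ * ‖v‖)
      = |u 0 * v 1 - u 1 * v 0| := by
  rw [InnerProductGeometry.sin_angle_mul_norm_mul_norm]
  rw [show (inner ℝ u u : ℝ) * inner ℝ v v - inner ℝ u v * inner ℝ u v
      = (u 0 * v 1 - u 1 * v 0)^2 by
    simp only [PiLp.inner_apply, RCLike.inner_apply, starRingEnd_apply, star_trivial,
      Fin.sum_univ_two]
    ring]
  exact Real.sqrt_sq_eq_abs _


-- translation of hull
lemma hull_translate (P u v : E2) :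
    convexHull ℝ ({P, P + u, P + v} : Set E2) = P +ᵥ convexHull ℝ ({0, u, v} : Set E2) := by
  have := (AffineEquiv.constVAdd ℝ E2 P).toAffineMap.image_convexHull ({0, u, v} : Set E2)
  have himg : ⇑(AffineEquiv.constVAdd ℝ E2 P).toAffineMap '' ({0, u, v} : Set E2)
      = ({P, P + u, P + v} : Set E2) := by
    simp [Set.image_insert_eq, AffineEquiv.constVAdd_apply, vadd_eq_add]
  rw [himg] at this
  rw [← this]
  rfl

lemma vol_tri_bounds (P Q R' : E2) :
    ENNReal.ofReal (|(Q-P) 0 * (R'-P) 1 - (Q-P) 1 * (R'-P) 0| / 2)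
      ≤ volume (convexHull ℝ ({P, Q, R'} : Set E2)) ∧
    volume (convexHull ℝ ({P, Q, R'} : Set E2))
      ≤ ENNReal.ofReal |(Q-P) 0 * (R'-P) 1 - (Q-P) 1 * (R'-P) 0| := by
  have h : ({P, Q, R'} : Set E2) = {P, P + (Q - P), P + (R' - P)} := by
    simp
  rw [h, hull_translate, measure_vadd]
  exact ⟨tri_vol_lower _ _, tri_vol_upper _ _⟩

lemma interior_vol (s : Set E2) (hs : Convex ℝ s) : volume (interior s) = volume s := by
  apply le_antisymm (measure_mono interior_subset)
  calc volume s ≤ volume (interior s ∪ frontier s) := by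
        apply measure_mono
        rw [← closure_eq_interior_union_frontier]
        exact subset_closure
    _ ≤ volume (interior s) + volume (frontier s) := measure_union_le _ _
    _ = volume (interior s) := by rw [hs.addHaar_frontier volume, add_zero]

set_option maxHeartbeats 1000000 in
lemma key {ε : ℝ} (hε : 0 < ε) (P Q R' : E2) (hPQ : P ≠ Q)
    (h1 : ε ≤ ∠ Q P R') (h2 : ε ≤ ∠ P Q R') (h3 : ε ≤ ∠ P R' Q) :
    0 < Real.sin ε ∧ dist P Q ^ 2 * Real.sin ε ^ 2
      ≤ 2 * (volume (interior (convexHull ℝ ({P, Q, R'} : Set E2)))).toReal := by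
  have pi_pos := Real.pi_pos
  have hRP : R' ≠ P := by
    rintro rfl
    rw [angle_self_of_ne hPQ] at h2; linarith
  have hRQ : R' ≠ Q := by
    rintro rfl
    rw [angle_self_of_ne hPQ.symm] at h1; linarith
  have hsum : ∠ Q P R' + ∠ P Q R' + ∠ P R' Q = Real.pi := by
    have := angle_add_angle_add_angle_eq_pi (p₁ := R') (p₂ := P) Q hRP.symm
    rw [angle_comm R' P Q, angle_comm Q R' P] at this
    linarith
  have hsinε : 0 < Real.sin ε := by
    apply Real.sin_pos_of_pos_of_lt_pi hε
    have := angle_nonneg P Q R'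
    have := angle_nonneg P R' Q
    linarith
  have hge : ∀ θ₁ θ₂ θ₃ : ℝ, θ₁ + θ₂ + θ₃ = Real.pi → ε ≤ θ₂ → ε ≤ θ₃ → ε ≤ θ₁ →
      Real.sin ε ≤ Real.sin θ₁ := fun θ₁ θ₂ θ₃ hs hb hc ha =>
    sinmono hε ha (by linarith)
  have hsα := hge _ _ _ hsum h2 h3 h1
  have hsβ := hge _ _ _ (by linarith : ∠ P Q R' + ∠ Q P R' + ∠ P R' Q = Real.pi) h1 h3 h2
  have hsγ := hge _ _ _ (by linarith : ∠ P R' Q + ∠ Q P R' + ∠ P Q R' = Real.pi) h1 h2 h3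
  set D := |(Q-P) 0 * (R'-P) 1 - (Q-P) 1 * (R'-P) 0| with hD
  have eq1 : Real.sin (∠ Q P R') * (‖Q - P‖ * ‖R' - P‖) = D := det_eq_sin (Q-P) (R'-P)
  have eq2 : Real.sin (∠ P Q R') * (‖P - Q‖ * ‖R' - Q‖) = D := by
    have h := det_eq_sin (P-Q) (R'-Q)
    have habs : |(P-Q) 0 * (R'-Q) 1 - (P-Q) 1 * (R'-Q) 0| = D := by
      rw [hD, abs_eq_abs]; right
      simp only [PiLp.sub_apply]
      ring
    rw [← habs]; exact h
  have eq3 : Real.sin (∠ P R' Q) * (‖R' - P‖ * ‖R' - Q‖) = D := by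
    have h := det_eq_sin (P-R') (Q-R')
    have habs : |(P-R') 0 * (Q-R') 1 - (P-R') 1 * (Q-R') 0| = D := by
      rw [hD, abs_eq_abs]; left
      simp only [PiLp.sub_apply]
      ring
    rw [← habs, ← norm_sub_rev P R', ← norm_sub_rev Q R']; exact h
  have hl : dist P Q = ‖P - Q‖ := dist_eq_norm P Q
  have hl' : ‖Q - P‖ = ‖P - Q‖ := norm_sub_rev Q P
  have hlpos : 0 < ‖P - Q‖ := by rw [← hl]; exact dist_pos.2 hPQ
  have hRPpos : 0 < ‖R' - P‖ := by rw [← dist_eq_norm]; exact dist_pos.2 hRP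
  have hRQpos : 0 < ‖R' - Q‖ := by rw [← dist_eq_norm]; exact dist_pos.2 hRQ
  have hsinα_nonneg : 0 ≤ Real.sin (∠ Q P R') :=
    Real.sin_nonneg_of_nonneg_of_le_pi (angle_nonneg _ _ _) (angle_le_pi _ _ _)
  have hDpos : 0 < D := by
    rw [← eq1, hl']
    have h : 0 < Real.sin (∠ Q P R') := lt_of_lt_of_le hsinε hsα
    positivity
  have hup : D ≤ ‖R' - P‖ * ‖R' - Q‖ := by
    rw [← eq3]
    exact mul_le_of_le_one_left (by positivity) (Real.sin_le_one _)
  have hDsq : D * D = (Real.sin (∠ Q P R') * Real.sin (∠ P Q R')) *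
      (‖P - Q‖^2 * (‖R' - P‖ * ‖R' - Q‖)) := by
    nth_rewrite 1 [← eq1]
    nth_rewrite 1 [← eq2]
    rw [hl']; ring
  have hab : Real.sin ε * Real.sin ε ≤ Real.sin (∠ Q P R') * Real.sin (∠ P Q R') :=
    mul_le_mul hsα hsβ hsinε.le hsinα_nonneg
  have hDD : (‖P - Q‖^2 * Real.sin ε ^2) * D ≤ D * D := by
    rw [hDsq]
    calc (‖P - Q‖^2 * Real.sin ε ^2) * D = (Real.sin ε * Real.sin ε) * (‖P - Q‖^2 * D) := by
          ring
      _ ≤ (Real.sin (∠ Q P R') * Real.sin (∠ P Q R')) * (‖P - Q‖^2 * (‖R' - P‖ * ‖R' - Q‖)) := by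
          exact mul_le_mul hab (mul_le_mul_of_nonneg_left hup (by positivity)) (by positivity)
            (mul_nonneg hsinα_nonneg (Real.sin_nonneg_of_nonneg_of_le_pi (angle_nonneg _ _ _)
              (angle_le_pi _ _ _)))
  have hkey : ‖P - Q‖^2 * Real.sin ε ^2 ≤ D := le_of_mul_le_mul_right hDD hDpos
  obtain ⟨hlow, hupv⟩ := vol_tri_bounds P Q R'
  have hconv : Convex ℝ (convexHull ℝ ({P, Q, R'} : Set E2)) := convex_convexHull _ _
  have hintvol : volume (interior (convexHull ℝ ({P, Q, R'} : Set E2)))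
      = volume (convexHull ℝ ({P, Q, R'} : Set E2)) := interior_vol _ hconv
  have hfin : volume (convexHull ℝ ({P, Q, R'} : Set E2)) ≠ ⊤ :=
    ne_top_of_le_ne_top ENNReal.ofReal_ne_top hupv
  have htr : D / 2 ≤ (volume (convexHull ℝ ({P, Q, R'} : Set E2))).toReal := by
    have h := ENNReal.toReal_mono hfin hlow
    rwa [ENNReal.toReal_ofReal (by positivity)] at h
  refine ⟨hsinε, ?_⟩
  rw [hintvol, hl]
  linarith

lemma edge_bound {ε : ℝ} (hε : 0 < ε) (a b c P Q : E2) (hPQ : P ≠ Q)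
    (hP : P = a ∨ P = b ∨ P = c) (hQ : Q = a ∨ Q = b ∨ Q = c)
    (h1 : ε ≤ ∠ b a c) (h2 : ε ≤ ∠ a b c) (h3 : ε ≤ ∠ a c b) :
    0 < Real.sin ε ∧ dist P Q ^ 2 * Real.sin ε ^ 2
      ≤ 2 * (volume (interior (convexHull ℝ ({a, b, c} : Set E2)))).toReal := by
  rcases hP with rfl | rfl | rfl <;> rcases hQ with rfl | rfl | rfl
  · exact absurd rfl hPQ
  · exact key hε P Q c hPQ h1 h2 h3
  · rw [show ({P, b, Q} : Set E2) = {P, Q, b} by ext w; simp; tauto]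
    exact key hε P Q b hPQ (by rwa [angle_comm] at h1) h3 h2
  · rw [show ({Q, P, c} : Set E2) = {P, Q, c} by ext w; simp; tauto]
    exact key hε P Q c hPQ h2 h1 (by rwa [angle_comm] at h3)
  · exact absurd rfl hPQ
  · rw [show ({a, P, Q} : Set E2) = {P, Q, a} by ext w; simp; tauto]
    exact key hε P Q a hPQ (by rwa [angle_comm] at h2) (by rwa [angle_comm] at h3) h1
  · rw [show ({Q, b, P} : Set E2) = {P, Q, b} by ext w; simp; tauto]
    exact key hε P Q b hPQ h3 (by rwa [angle_comm] at h1) (by rwa [angle_comm] at h2)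
  · rw [show ({a, Q, P} : Set E2) = {P, Q, a} by ext w; simp; tauto]
    exact key hε P Q a hPQ (by rwa [angle_comm] at h3) (by rwa [angle_comm] at h2)
      (by rwa [angle_comm] at h1)
  · exact absurd rfl hPQ

lemma ball_vol (R : ℝ) (hR : 0 < R) :
    volume (Metric.ball (0:E2) R) = ENNReal.ofReal (Real.pi * R^2) := by
  rw [EuclideanSpace.volume_ball]
  simp only [Fintype.card_fin]
  rw [show ((2:ℕ):ℝ)/2 + 1 = 2 by norm_num, Real.Gamma_two, div_one,
    Real.sq_sqrt Real.pi_pos.le, ← ENNReal.ofReal_pow hR.le, ← ENNReal.ofReal_mul (by positivity)]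
  ring_nf


end Aux

/-- Sum of squared edge lengths in a uniformly nondegenerate geodesic triangulation inside a
disk of radius `R`: if every triangle has all angles `≥ ε`, all triangles lie in `D_R`, triangle
interiors are pairwise disjoint, every edge in `E'` is a side of each of its two distinct
adjacent triangles, and every triangle is adjacent to at most `3` edges of `E'`, then
`Σ_e l_e² ≤ (3 / sin² ε) · π R²`. -/
theorem sum_sq_edge_lengths_le {ι κ : Type*} [DecidableEq ι] [DecidableEq κ]
    (F : Finset ι) (A B C : ι → EuclideanSpace ℝ (Fin 2))
    (R ε : ℝ) (hε : 0 < ε) (hR : 0 < R)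
    (E' : Finset κ) (p q : κ → EuclideanSpace ℝ (Fin 2)) (t₁ t₂ : κ → ι)
    (hadj : ∀ e ∈ E', t₁ e ∈ F ∧ t₂ e ∈ F ∧ t₁ e ≠ t₂ e)
    (hpq : ∀ e ∈ E', p e ≠ q e)
    (hside : ∀ e ∈ E', ∀ t ∈ ({t₁ e, t₂ e} : Set ι),
      ({p e, q e} : Set (EuclideanSpace ℝ (Fin 2))) ⊆ {A t, B t, C t})
    (hcount : ∀ t ∈ F,
      (E'.filter (fun e => t₁ e = t ∨ t₂ e = t)).card ≤ 3)
    (hball : ∀ t ∈ F,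
      ({A t, B t, C t} : Set (EuclideanSpace ℝ (Fin 2))) ⊆ Metric.ball 0 R)
    (hang : ∀ t ∈ F, ε ≤ ∠ (B t) (A t) (C t) ∧ ε ≤ ∠ (A t) (B t) (C t) ∧
      ε ≤ ∠ (A t) (C t) (B t))
    (hdisjoint : (F : Set ι).Pairwise (fun s t =>
      Disjoint (interior (convexHull ℝ ({A s, B s, C s} : Set (EuclideanSpace ℝ (Fin 2)))))
        (interior (convexHull ℝ ({A t, B t, C t} : Set (EuclideanSpace ℝ (Fin 2))))))) :
    ∑ e ∈ E', dist (p e) (q e) ^ 2 ≤ 3 / Real.sin ε ^ 2 * (Real.pi * R ^ 2) := by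
  rcases E'.eq_empty_or_nonempty with rfl | ⟨e₀, he₀⟩
  · simp only [Finset.sum_empty]
    positivity
  -- per-edge bound
  have hEB : ∀ e ∈ E', ∀ t ∈ ({t₁ e, t₂ e} : Set ι), t ∈ F → 0 < Real.sin ε ∧
      dist (p e) (q e) ^ 2 * Real.sin ε ^ 2
        ≤ 2 * (volume (interior (convexHull ℝ
            ({A t, B t, C t} : Set (EuclideanSpace ℝ (Fin 2)))))).toReal := by
    intro e he t htm htF
    have hsub := hside e he t htm
    have hPm : p e = A t ∨ p e = B t ∨ p e = C t := by
      have := hsub (Set.mem_insert _ _); simpa using this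
    have hQm : q e = A t ∨ q e = B t ∨ q e = C t := by
      have := hsub (Set.mem_insert_of_mem _ rfl); simpa using this
    obtain ⟨ha1, ha2, ha3⟩ := hang t htF
    exact edge_bound hε (A t) (B t) (C t) (p e) (q e) (hpq e he) hPm hQm ha1 ha2 ha3
  have hsin : 0 < Real.sin ε :=
    (hEB e₀ he₀ (t₁ e₀) (Set.mem_insert _ _) (hadj e₀ he₀).1).1
  set a : ι → ℝ := fun t =>
    (volume (interior (convexHull ℝ ({A t, B t, C t} : Set (EuclideanSpace ℝ (Fin 2)))))).toReal
    with ha_def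
  have ha_nonneg : ∀ t, 0 ≤ a t := fun t => ENNReal.toReal_nonneg
  have hedge : ∀ e ∈ E', dist (p e) (q e) ^ 2 * Real.sin ε ^ 2 ≤ a (t₁ e) + a (t₂ e) := by
    intro e he
    have h1 := (hEB e he (t₁ e) (Set.mem_insert _ _) (hadj e he).1).2
    have h2 := (hEB e he (t₂ e) (Set.mem_insert_of_mem _ rfl) (hadj e he).2.1).2
    change _ ≤ 2 * a (t₁ e) at h1
    change _ ≤ 2 * a (t₂ e) at h2
    linarith
  -- counting
  have hsum1 : ∑ e ∈ E', (a (t₁ e) + a (t₂ e)) ≤ 3 * ∑ t ∈ F, a t := by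
    rw [Finset.sum_add_distrib]
    have e1 : ∑ e ∈ E', a (t₁ e)
        = ∑ t ∈ F, ∑ e ∈ E'.filter (fun e => t₁ e = t), a (t₁ e) :=
      (Finset.sum_fiberwise_of_maps_to (fun e he => (hadj e he).1) _).symm
    have e2 : ∑ e ∈ E', a (t₂ e)
        = ∑ t ∈ F, ∑ e ∈ E'.filter (fun e => t₂ e = t), a (t₂ e) :=
      (Finset.sum_fiberwise_of_maps_to (fun e he => (hadj e he).2.1) _).symm
    rw [e1, e2, ← Finset.sum_add_distrib]
    have : ∀ t ∈ F, (∑ e ∈ E'.filter (fun e => t₁ e = t), a (t₁ e))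
        + (∑ e ∈ E'.filter (fun e => t₂ e = t), a (t₂ e)) ≤ 3 * a t := by
      intro t ht
      have c1 : ∑ e ∈ E'.filter (fun e => t₁ e = t), a (t₁ e)
          = (E'.filter (fun e => t₁ e = t)).card * a t := by
        rw [Finset.sum_congr rfl (fun e he => by
          rw [(Finset.mem_filter.mp he).2]), Finset.sum_const, nsmul_eq_mul]
      have c2 : ∑ e ∈ E'.filter (fun e => t₂ e = t), a (t₂ e)
          = (E'.filter (fun e => t₂ e = t)).card * a t := by
        rw [Finset.sum_congr rfl (fun e he => by
          rw [(Finset.mem_filter.mp he).2]), Finset.sum_const, nsmul_eq_mul]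
      have hdisj : Disjoint (E'.filter (fun e => t₁ e = t)) (E'.filter (fun e => t₂ e = t)) := by
        rw [Finset.disjoint_left]
        intro e h1 h2
        obtain ⟨he, h1'⟩ := Finset.mem_filter.mp h1
        obtain ⟨_, h2'⟩ := Finset.mem_filter.mp h2
        exact (hadj e he).2.2 (h1'.trans h2'.symm)
      have hcard : (E'.filter (fun e => t₁ e = t)).card
          + (E'.filter (fun e => t₂ e = t)).card ≤ 3 := by
        rw [← Finset.card_union_of_disjoint hdisj, ← Finset.filter_or]
        exact hcount t ht
      rw [c1, c2, ← add_mul]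
      have : ((E'.filter (fun e => t₁ e = t)).card
          + (E'.filter (fun e => t₂ e = t)).card : ℝ) ≤ 3 := by exact_mod_cast hcard
      nlinarith [ha_nonneg t]
    calc ∑ t ∈ F, ((∑ e ∈ E'.filter (fun e => t₁ e = t), a (t₁ e))
        + (∑ e ∈ E'.filter (fun e => t₂ e = t), a (t₂ e)))
        ≤ ∑ t ∈ F, 3 * a t := Finset.sum_le_sum this
      _ = 3 * ∑ t ∈ F, a t := by rw [Finset.mul_sum]
  -- total area bound
  have hsum2 : ∑ t ∈ F, a t ≤ Real.pi * R ^ 2 := by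
    have hsubball : ∀ t ∈ F, interior (convexHull ℝ
        ({A t, B t, C t} : Set (EuclideanSpace ℝ (Fin 2)))) ⊆ Metric.ball 0 R := fun t ht =>
      interior_subset.trans (convexHull_min (hball t ht) (convex_ball _ _))
    have hmeas : ∑ t ∈ F, volume (interior (convexHull ℝ
        ({A t, B t, C t} : Set (EuclideanSpace ℝ (Fin 2)))))
        ≤ ENNReal.ofReal (Real.pi * R ^ 2) := by
      rw [← measure_biUnion_finset hdisjoint
        (fun t _ => isOpen_interior.measurableSet), ← ball_vol R hR]
      exact measure_mono (Set.iUnion₂_subset hsubball)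
    have hfin : ∀ t ∈ F, volume (interior (convexHull ℝ
        ({A t, B t, C t} : Set (EuclideanSpace ℝ (Fin 2))))) ≠ ⊤ := by
      intro t ht
      exact ne_top_of_le_ne_top ENNReal.ofReal_ne_top
        ((measure_mono (hsubball t ht)).trans (le_of_eq (ball_vol R hR)))
    calc ∑ t ∈ F, a t = (∑ t ∈ F, volume (interior (convexHull ℝ
          ({A t, B t, C t} : Set (EuclideanSpace ℝ (Fin 2)))))).toReal :=
        (ENNReal.toReal_sum hfin).symm
      _ ≤ (ENNReal.ofReal (Real.pi * R ^ 2)).toReal :=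
        ENNReal.toReal_mono ENNReal.ofReal_ne_top hmeas
      _ = Real.pi * R ^ 2 := ENNReal.toReal_ofReal (by positivity)
  -- combine
  have hmain : (∑ e ∈ E', dist (p e) (q e) ^ 2) * Real.sin ε ^ 2
      ≤ 3 * (Real.pi * R ^ 2) := by
    rw [Finset.sum_mul]
    calc ∑ e ∈ E', dist (p e) (q e) ^ 2 * Real.sin ε ^ 2
        ≤ ∑ e ∈ E', (a (t₁ e) + a (t₂ e)) := Finset.sum_le_sum hedge
      _ ≤ 3 * ∑ t ∈ F, a t := hsum1
      _ ≤ 3 * (Real.pi * R ^ 2) := by linarith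
  rw [div_mul_eq_mul_div, le_div_iff₀ (by positivity)]
  linarith
end
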